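/- arXiv:0807.4169 — 3 statements merged into one kernel-verified Lean document; each statement's English description precedes it below -/
import Mathlib

section
/- Let k ≥ 1, let w ∈ [k]* with |w| = n ≥ 2, and let ρ ∈ NC(n). Then Δ(Y_{w;ρ}) = Σ_{π ∈ NC(n), π ≤ ρ} Y_{w;π} ⊗ Y_{w;K_ρ(π)}, where K_ρ(π) is the relative Kreweras complement of π in ρ. -/
open scoped TensorProduct

noncomputable section

namespace FreeProb

attribute [local instance] Classical.propDecidable

/-! ### Non-crossing partitions of `{1,…,n}`, modelled as setoids on `Fin n` -/

/-- The partition `0_n` of `Fin n` into singletons. -/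
def botS (n : ℕ) : Setoid (Fin n) := ⟨Eq, eq_equivalence⟩

/-- The partition `1_n` of `Fin n` with a single block. -/
def topS (n : ℕ) : Setoid (Fin n) :=
  ⟨fun _ _ => True, ⟨fun _ => trivial, fun _ => trivial, fun _ _ => trivial⟩⟩

/-- A partition is non-crossing if there is no crossing `a < b < c < d` with
`a ∼ c`, `b ∼ d` lying in different blocks. -/
def IsNC {n : ℕ} (s : Setoid (Fin n)) : Prop :=
  ∀ a b c d : Fin n, a < b → b < c → c < d → s.r a c → s.r b d → s.r a b

/-- The lattice `NC(n)` of non-crossing partitions, ordered by reversed refinement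
(the order inherited from the lattice of setoids). -/
abbrev NC (n : ℕ) := {s : Setoid (Fin n) // IsNC s}

instance (n : ℕ) : Finite (Setoid (Fin n)) :=
  Finite.of_injective (fun s => s.r) (by intro s t h; cases s; cases t; cases h; rfl)

noncomputable instance (n : ℕ) : Fintype (Setoid (Fin n)) := Fintype.ofFinite _

noncomputable instance (n : ℕ) : Fintype (NC n) := Fintype.ofFinite _

/-- `0_n` as a non-crossing partition. -/
def ncBot (n : ℕ) : NC n :=
  ⟨botS n, by
    intro a b c d h1 h2 h3 hac _
    have hac' : a = c := hac
    subst hac'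
    exact absurd (h1.trans h2) (lt_irrefl _)⟩

/-- `1_n` as a non-crossing partition. -/
def ncTop (n : ℕ) : NC n := ⟨topS n, fun _ _ _ _ _ _ _ _ _ => trivial⟩

/-- The blocks of a partition, as a finset of finsets. -/
def blocks {n : ℕ} (s : Setoid (Fin n)) : Finset (Finset (Fin n)) :=
  Finset.univ.image fun a => Finset.univ.filter fun b => s.r a b

/-- The next element of the block of `b`, in increasing cyclic order. -/
def nextFun {n : ℕ} (s : Setoid (Fin n)) (b : Fin n) : Fin n :=
  let B : Finset (Fin n) := Finset.univ.filter fun a => s.r b a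
  let A : Finset (Fin n) := B.filter fun a => b < a
  if h : A.Nonempty then A.min' h
  else B.min' ⟨b, Finset.mem_filter.mpr ⟨Finset.mem_univ b, s.iseqv.refl b⟩⟩

/-- The permutation `P_π` associated to a partition `π`: its cycles are the blocks
of `π`, traversed in increasing order.  (The function `nextFun` is indeed bijective,
so the `dite` below always takes its first branch.) -/
def permOf {n : ℕ} (s : Setoid (Fin n)) : Equiv.Perm (Fin n) :=
  if h : Function.Bijective (nextFun s) then Equiv.ofBijective _ h else 1

/-- The partition of `Fin n` into the cycles (orbits) of a permutation. -/
def cycleSetoid {n : ℕ} (σ : Equiv.Perm (Fin n)) : Setoid (Fin n) :=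
  ⟨σ.SameCycle, ⟨fun x => Equiv.Perm.SameCycle.refl σ x, fun h => h.symm, fun h h' => h.trans h'⟩⟩

/-- The Kreweras complement `K(π)`, determined by `P_{K(π)} = P_π⁻¹ * P_{1_n}`. -/
def kreweras {n : ℕ} (s : Setoid (Fin n)) : Setoid (Fin n) :=
  cycleSetoid ((permOf s)⁻¹ * permOf (topS n))

/-- The relative Kreweras complement `K_t(s)`, determined by `P_{K_t(s)} = P_s⁻¹ * P_t`. -/
def relKreweras {n : ℕ} (s t : Setoid (Fin n)) : Setoid (Fin n) :=
  cycleSetoid ((permOf s)⁻¹ * permOf t)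

/-! ### Words, and the Hopf algebra `Y^(k)` -/

/-- Words over the alphabet `{1,…,k}`, encoded as pairs `⟨n, w⟩` with `w : Fin n → Fin k`. -/
abbrev WordIdx (k : ℕ) := Σ n : ℕ, Fin n → Fin k

/-- The commutative polynomial algebra `Y^(k) = ℂ[Y_w : |w| ≥ 2]`. -/
abbrev Yalg (k : ℕ) := MvPolynomial {p : WordIdx k // 2 ≤ p.1} ℂ

/-- The generator `Y_w`, with the convention `Y_w = 1` for `|w| ≤ 1`. -/
def Ygen {k : ℕ} (p : WordIdx k) : Yalg k :=
  if h : 2 ≤ p.1 then MvPolynomial.X ⟨p, h⟩ else 1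

/-- The subword `w|B` of `w` on the positions in `B` (in increasing order). -/
def subword {k n : ℕ} (w : Fin n → Fin k) (B : Finset (Fin n)) : Fin B.card → Fin k :=
  fun i => w (B.orderIsoOfFin rfl i).1

/-- The element `Y_{w;π} = ∏_{B block of π} Y_{w|B}`. -/
def Yprod {k n : ℕ} (w : Fin n → Fin k) (s : Setoid (Fin n)) : Yalg k :=
  ∏ B ∈ blocks s, Ygen ⟨B.card, subword w B⟩

/-- The comultiplication of `Y^(k)`:
`Δ(Y_w) = ∑_{π ∈ NC(n)} Y_{w;π} ⊗ Y_{w;K(π)}`. -/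
def Δk (k : ℕ) : Yalg k →ₐ[ℂ] Yalg k ⊗[ℂ] Yalg k :=
  MvPolynomial.aeval fun q : {p : WordIdx k // 2 ≤ p.1} =>
    ∑ π : NC q.1.1, Yprod q.1.2 π.1 ⊗ₜ[ℂ] Yprod q.1.2 (kreweras π.1)

/-- The counit of `Y^(k)`: `ε(Y_w) = 0` for `|w| ≥ 2`. -/
def εk (k : ℕ) : Yalg k →ₐ[ℂ] ℂ := MvPolynomial.aeval fun _ => 0

/-- The grading of `Y^(k)` in which `Y_w` is homogeneous of degree `|w| - 1`. -/
def Ycomp (k n : ℕ) : Submodule ℂ (Yalg k) :=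
  MvPolynomial.weightedHomogeneousSubmodule ℂ (fun q : {p : WordIdx k // 2 ≤ p.1} => q.1.1 - 1) n

/-! ### Convolution of linear functionals on a bialgebra -/

variable {A : Type} [CommRing A] [Algebra ℂ A]

/-- Convolution `ξη := mult ∘ (ξ ⊗ η) ∘ Δ` of two linear functionals. -/
def convF (D : A →ₐ[ℂ] A ⊗[ℂ] A) (ξ η : A →ₗ[ℂ] ℂ) : A →ₗ[ℂ] ℂ :=
  LinearMap.mul' ℂ ℂ ∘ₗ TensorProduct.map ξ η ∘ₗ D.toLinearMap

/-- Convolution powers `ξ^m`, with `ξ^0 := e` (the counit). -/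
def convPowF (D : A →ₐ[ℂ] A ⊗[ℂ] A) (e ξ : A →ₗ[ℂ] ℂ) : ℕ → (A →ₗ[ℂ] ℂ)
  | 0 => e
  | m + 1 => convF D (convPowF D e ξ m) ξ

/-- `(log η)(x) = -∑_{ℓ ≥ 1} (1/ℓ) (e - η)^ℓ (x)`, the logarithm of a functional `η`
with respect to convolution (`e` is the counit).  On each `x` the sum has only finitely
many nonzero terms, so the `tsum` below is the honest value. -/
def logFunF (D : A →ₐ[ℂ] A ⊗[ℂ] A) (e η : A →ₗ[ℂ] ℂ) (x : A) : ℂ :=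
  -∑' ℓ : ℕ, (1 / ((ℓ : ℂ) + 1)) * convPowF D e (e - η) (ℓ + 1) x

/-! ### Distributions, R-transforms, free multiplicative convolution -/

/-- A distribution (or a family of coefficients of a power series in `k` non-commuting
indeterminates), encoded by its values on all words. -/
abbrev Dist (k : ℕ) := WordIdx k → ℂ

/-- `μ ∈ G_k`: `μ(1) = 1` and `μ(X_i) = 1` for all `i`. -/
def InG {k : ℕ} (μ : Dist k) : Prop :=
  (∀ w : Fin 0 → Fin k, μ ⟨0, w⟩ = 1) ∧ (∀ w : Fin 1 → Fin k, μ ⟨1, w⟩ = 1)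

/-- `Cf_{w;π}(f) = ∏_{B block of π} Cf_{w|B}(f)`, for a coefficient family `α`. -/
def cfPart {k n : ℕ} (α : Dist k) (w : Fin n → Fin k) (s : Setoid (Fin n)) : ℂ :=
  ∏ B ∈ blocks s, α ⟨B.card, subword w B⟩

/-- `α` is (the coefficient family of) the R-transform of `μ`:
the moment–cumulant relations hold. -/
def IsRTransform {k : ℕ} (μ α : Dist k) : Prop :=
  (∀ w : Fin 0 → Fin k, α ⟨0, w⟩ = 0) ∧
  ∀ (n : ℕ) (w : Fin n → Fin k), 1 ≤ n → μ ⟨n, w⟩ = ∑ π : NC n, cfPart α w π.1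

/-- `γ` is the R-transform of the free multiplicative convolution of distributions
with R-transforms `α` and `β`:
`Cf_w(R_{μ⊠ν}) = ∑_{π ∈ NC(n)} Cf_{w;π}(R_μ) Cf_{w;K(π)}(R_ν)`. -/
def IsBoxtimes {k : ℕ} (α β γ : Dist k) : Prop :=
  ∀ (n : ℕ) (w : Fin n → Fin k), 1 ≤ n →
    γ ⟨n, w⟩ = ∑ π : NC n, cfPart α w π.1 * cfPart β w (kreweras π.1)

/-- The unit `μ_o` of `(G_k, ⊠)`: all moments equal to `1`. -/
def distUnit (k : ℕ) : Dist k := fun _ => 1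

/-- The character `χ_μ` of `Y^(k)` associated to a distribution with R-transform `α`:
`χ_μ(Y_w) = Cf_w(R_μ)`. -/
def charOf {k : ℕ} (α : Dist k) : Yalg k →ₐ[ℂ] ℂ :=
  MvPolynomial.aeval fun q => α q.1

/-- The generalized coefficient `Cf_w^(Γ)(f) = ∏_{j=1}^{ℓ} Cf_{w;K_{π_j}(π_{j-1})}(f)`
attached to a (multi-)chain `Γ = (π_0,…,π_{m+1})` in `NC(n)`. -/
def cfChain {k n : ℕ} (α : Dist k) (w : Fin n → Fin k) (m : ℕ)
    (c : Fin (m + 2) → Setoid (Fin n)) : ℂ :=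
  ∏ j : Fin (m + 1), cfPart α w (relKreweras (c j.castSucc) (c j.succ))

/-- The `i`-th marginal coefficients: the free cumulants of the `i`-th marginal `μ_i`
are `Cf_{(i,…,i)}(R_μ)`. -/
def margFam {k : ℕ} (α : Dist k) (i : Fin k) : Dist 1 := fun q => α ⟨q.1, fun _ => i⟩


/-! ### Iterated comultiplication -/

/-- The iterated tensor powers `Y^(k) ⊗ ⋯ ⊗ Y^(k)` (`m+1` factors), as objects of
`ModuleCat ℂ` so that the recursion carries its module structure. -/
def YpowM (k : ℕ) : ℕ → ModuleCat ℂ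
  | 0 => ModuleCat.of ℂ (Yalg k)
  | m + 1 => ModuleCat.of ℂ (Yalg k ⊗[ℂ] YpowM k m)

/-- The iterated comultiplication: `Δiter k m = Δ^{m+1}` in the notation of the paper
(`Δiter k 0 = id`, `Δiter k (m+1) = (id ⊗ Δ^{m+1}) ∘ Δ`). -/
def Δiter (k : ℕ) : ∀ m : ℕ, Yalg k →ₗ[ℂ] YpowM k m
  | 0 => LinearMap.id
  | m + 1 => TensorProduct.map LinearMap.id (Δiter k m) ∘ₗ (Δk k).toLinearMap

/-- The pure tensor `Y_{w;K_{π_1}(π_0)} ⊗ ⋯ ⊗ Y_{w;K_{π_{m+1}}(π_m)}` attached to a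
multi-chain `(π_0, …, π_{m+1})`. -/
def chainTensor {k n : ℕ} (w : Fin n → Fin k) :
    ∀ m : ℕ, (Fin (m + 2) → Setoid (Fin n)) → YpowM k m
  | 0, c => Yprod w (relKreweras (c 0) (c 1))
  | m + 1, c => Yprod w (relKreweras (c 0) (c 1)) ⊗ₜ[ℂ] chainTensor w m (fun i => c i.succ)


/-! ### One-variable power series tools -/

/-- The R-transform of a one-variable distribution, as a power series. -/
def Rser (α : Dist 1) : PowerSeries ℂ :=
  PowerSeries.mk fun m => if m = 0 then 0 else α ⟨m, fun _ => 0⟩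

/-- Composition `f ∘ g` of formal power series (the honest composition whenever
`g` has vanishing constant term). -/
def psComp (f g : PowerSeries ℂ) : PowerSeries ℂ :=
  PowerSeries.mk fun m =>
    ∑ j ∈ Finset.range (m + 1), PowerSeries.coeff j f * PowerSeries.coeff m (g ^ j)

/-- `S` is the S-transform of the distribution with R-transform `α`:
`S(z) = (1/z)·R^{⟨-1⟩}(z)`, i.e. `z·S(z)` is the compositional inverse of `R`. -/
def SChar (α : Dist 1) (S : PowerSeries ℂ) : Prop :=
  PowerSeries.constantCoeff S = 1 ∧
  psComp (Rser α) (PowerSeries.X * S) = PowerSeries.X ∧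
  psComp (PowerSeries.X * S) (Rser α) = PowerSeries.X

/-- The formal logarithm `log f = -∑_{ℓ≥1} (1/ℓ)(1-f)^ℓ = ∑_{ℓ≥1} ((-1)^{ℓ+1}/ℓ)(f-1)^ℓ`
of a power series (the honest logarithm whenever `f` has constant term 1). -/
def psLog {B : Type} [CommRing B] [Algebra ℂ B] (f : PowerSeries B) : PowerSeries B :=
  PowerSeries.mk fun m =>
    ∑ ℓ ∈ Finset.range (m + 1), ((-1 : ℂ) ^ (ℓ + 1) / ℓ) • PowerSeries.coeff m ((f - 1) ^ ℓ)

/-- The coefficient-wise LS-transform of a one-variable distribution, as a power series. -/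
def LSseries (α : Dist 1) : PowerSeries ℂ :=
  PowerSeries.mk fun n =>
    if 2 ≤ n then
      logFunF (Δk 1) (εk 1).toLinearMap (charOf α).toLinearMap (Ygen ⟨n, fun _ => 0⟩)
    else 0

/-! ### The Hopf algebra `Sym` of symmetric functions -/

/-- `Sym`, realized as the free commutative algebra on the complete homogeneous
symmetric functions `h_1, h_2, …`. -/
abbrev SymA := MvPolynomial {m : ℕ // 1 ≤ m} ℂ

/-- The complete homogeneous symmetric function `h_m` (with `h_0 = 1`). -/
def Hgen (m : ℕ) : SymA := if h : 1 ≤ m then MvPolynomial.X ⟨m, h⟩ else 1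

/-- The comultiplication of `Sym`: `Δ(h_n) = ∑_{i=0}^n h_i ⊗ h_{n-i}`. -/
def ΔSym : SymA →ₐ[ℂ] SymA ⊗[ℂ] SymA :=
  MvPolynomial.aeval fun q : {m : ℕ // 1 ≤ m} =>
    ∑ i ∈ Finset.range (q.1 + 1), Hgen i ⊗ₜ[ℂ] Hgen (q.1 - i)

/-- The counit of `Sym`. -/
def εSym : SymA →ₐ[ℂ] ℂ := MvPolynomial.aeval fun _ => 0

/-- The generating series `h(z) = 1 + ∑ (-1)^n h_n z^n`. -/
def hSymSeries : PowerSeries SymA :=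
  PowerSeries.mk fun m => if m = 0 then 1 else (-1 : SymA) ^ m * Hgen m

/-- The generating series `e(z) = 1 + ∑ e_n z^n = 1/h(z)`. -/
def eSymSeries : PowerSeries SymA := PowerSeries.invOfUnit hSymSeries 1

/-- The elementary symmetric function `e_m`, defined through `e(z) = 1/h(z)`. -/
def eSym (m : ℕ) : SymA := PowerSeries.coeff m eSymSeries

/-- The power sum symmetric function `p_m`, defined through
`log e(z) = ∑_{m≥1} ((-1)^{m+1}/m) p_m z^m`. -/
def pSym (m : ℕ) : SymA :=
  ((-1 : ℂ) ^ (m + 1) * m) • PowerSeries.coeff m (psLog eSymSeries)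

/-- The grading of `Sym` (`h_n` homogeneous of degree `n`). -/
def SymComp (n : ℕ) : Submodule ℂ SymA :=
  MvPolynomial.weightedHomogeneousSubmodule ℂ (fun q : {m : ℕ // 1 ≤ m} => q.1) n

/-- The symmetric function `y_n = ∑_{π ∈ NC(n-1)} ∏_{B block of π} e_{|B|}`. -/
def ySym (n : ℕ) : SymA := ∑ π : NC (n - 1), ∏ B ∈ blocks π.1, eSym B.card

/-- The homomorphism `Φ : Y^(1) → Sym`, `Φ(Y_n) = y_n`. -/
def Phi : Yalg 1 →ₐ[ℂ] SymA := MvPolynomial.aeval fun q => ySym q.1.1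

/-- The character `θ_μ` of `Sym` attached to a distribution with S-transform `S`:
`θ_μ(h_n) = (-1)^n β_n` where `S(z) = 1 + ∑ β_n z^n`. -/
def thetaOf (S : PowerSeries ℂ) : SymA →ₐ[ℂ] ℂ :=
  MvPolynomial.aeval fun q : {m : ℕ // 1 ≤ m} =>
    (-1 : ℂ) ^ q.1 * PowerSeries.coeff q.1 S

/-- Infinitesimal characters of `Sym`. -/
def IsInfCharSym (ξ : SymA →ₗ[ℂ] ℂ) : Prop :=
  ∀ u v : SymA, ξ (u * v) = ξ u * εSym v + εSym u * ξ v

/-! ### Auxiliary development for Lemma 3.3 -/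

section Aux

variable {n : ℕ}

lemma perm_apply_inv_self {α : Type*} (f : Equiv.Perm α) (x : α) : f (f⁻¹ x) = x :=
  f.apply_symm_apply x

lemma perm_inv_apply_self {α : Type*} (f : Equiv.Perm α) (x : α) : f⁻¹ (f x) = x :=
  f.symm_apply_apply x

lemma nextFun_def (s : Setoid (Fin n)) (b : Fin n) :
    nextFun s b =
      if h : (((Finset.univ.filter fun a => s.r b a)).filter fun a => b < a).Nonempty
      then (((Finset.univ.filter fun a => s.r b a)).filter fun a => b < a).min' h
      else (Finset.univ.filter fun a => s.r b a).min'
        ⟨b, Finset.mem_filter.mpr ⟨Finset.mem_univ b, s.iseqv.refl b⟩⟩ := rfl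

lemma rel_nextFun (s : Setoid (Fin n)) (b : Fin n) : s.r b (nextFun s b) := by
  rw [nextFun_def]
  split_ifs with h
  · have h2 := Finset.min'_mem _ h
    simp only [Finset.mem_filter] at h2
    exact h2.1.2
  · have h2 := Finset.min'_mem (Finset.univ.filter fun a => s.r b a)
      ⟨b, Finset.mem_filter.mpr ⟨Finset.mem_univ b, s.iseqv.refl b⟩⟩
    simp only [Finset.mem_filter] at h2
    exact h2.2

private lemma nextFun_ne (s : Setoid (Fin n)) {b₁ b₂ : Fin n} (hbb : s.r b₁ b₂)
    (hlt : b₁ < b₂) : nextFun s b₁ ≠ nextFun s b₂ := by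
  rw [nextFun_def, nextFun_def]
  have hb₂C₁ : b₂ ∈ Finset.univ.filter fun a => s.r b₁ a :=
    Finset.mem_filter.mpr ⟨Finset.mem_univ _, hbb⟩
  have hb₁C₂ : b₁ ∈ Finset.univ.filter fun a => s.r b₂ a :=
    Finset.mem_filter.mpr ⟨Finset.mem_univ _, s.iseqv.symm hbb⟩
  have hA₁ : (((Finset.univ.filter fun a => s.r b₁ a)).filter fun a => b₁ < a).Nonempty :=
    ⟨b₂, Finset.mem_filter.mpr ⟨hb₂C₁, hlt⟩⟩
  rw [dif_pos hA₁]
  have hmin₁ : (((Finset.univ.filter fun a => s.r b₁ a)).filter fun a => b₁ < a).min' hA₁ ≤ b₂ :=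
    Finset.min'_le _ _ (Finset.mem_filter.mpr ⟨hb₂C₁, hlt⟩)
  split_ifs with h₂
  · have hmin₂ := Finset.min'_mem _ h₂
    simp only [Finset.mem_filter] at hmin₂
    exact ne_of_lt (lt_of_le_of_lt hmin₁ hmin₂.2)
  · have hminC : (Finset.univ.filter fun a => s.r b₂ a).min'
        ⟨b₁, hb₁C₂⟩ ≤ b₁ := Finset.min'_le _ _ hb₁C₂
    have hmem := Finset.min'_mem _ hA₁
    simp only [Finset.mem_filter] at hmem
    exact fun hEq => absurd (lt_of_le_of_lt (hEq ▸ hminC) hmem.2) (lt_irrefl _)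

lemma nextFun_injective (s : Setoid (Fin n)) : Function.Injective (nextFun s) := by
  intro b₁ b₂ hEq
  by_contra hne
  have h1 : s.r b₁ (nextFun s b₁) := rel_nextFun s b₁
  have h2 : s.r b₂ (nextFun s b₂) := rel_nextFun s b₂
  rw [hEq] at h1
  have hbb : s.r b₁ b₂ := s.iseqv.trans h1 (s.iseqv.symm h2)
  rcases lt_trichotomy b₁ b₂ with h | h | h
  · exact nextFun_ne s hbb h hEq
  · exact hne h
  · exact nextFun_ne s (s.iseqv.symm hbb) h hEq.symm

lemma nextFun_bijective (s : Setoid (Fin n)) : Function.Bijective (nextFun s) :=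
  Finite.injective_iff_bijective.mp (nextFun_injective s)

lemma permOf_apply (s : Setoid (Fin n)) (x : Fin n) : permOf s x = nextFun s x := by
  rw [permOf, dif_pos (nextFun_bijective s)]; rfl

lemma rel_permOf (s : Setoid (Fin n)) (x : Fin n) : s.r x (permOf s x) := by
  rw [permOf_apply]; exact rel_nextFun s x

lemma rel_permOf_inv (s : Setoid (Fin n)) (x : Fin n) : s.r ((permOf s)⁻¹ x) x := by
  have h := rel_permOf s ((permOf s)⁻¹ x)
  rwa [perm_apply_inv_self] at h

end Aux
section Aux2

variable {n : ℕ}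

lemma classOf_mem_blocks (s : Setoid (Fin n)) (x : Fin n) :
    (Finset.univ.filter fun y => s.r x y) ∈ blocks s :=
  Finset.mem_image_of_mem _ (Finset.mem_univ x)

lemma mem_classOf_self (s : Setoid (Fin n)) (x : Fin n) :
    x ∈ Finset.univ.filter fun y => s.r x y :=
  Finset.mem_filter.mpr ⟨Finset.mem_univ _, s.iseqv.refl x⟩

lemma block_eq_classOf {s : Setoid (Fin n)} {B : Finset (Fin n)} (hB : B ∈ blocks s)
    {x : Fin n} (hx : x ∈ B) : B = Finset.univ.filter fun y => s.r x y := by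
  obtain ⟨a, -, rfl⟩ := Finset.mem_image.mp hB
  have hax : s.r a x := (Finset.mem_filter.mp hx).2
  ext y
  simp only [Finset.mem_filter, Finset.mem_univ, true_and]
  exact ⟨fun h => s.iseqv.trans (s.iseqv.symm hax) h, fun h => s.iseqv.trans hax h⟩

lemma mem_of_mem_block {s : Setoid (Fin n)} {B : Finset (Fin n)} (hB : B ∈ blocks s)
    {x y : Fin n} (hx : x ∈ B) (hxy : s.r x y) : y ∈ B := by
  rw [block_eq_classOf hB hx]
  exact Finset.mem_filter.mpr ⟨Finset.mem_univ _, hxy⟩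

lemma block_nonempty {s : Setoid (Fin n)} {B : Finset (Fin n)} (hB : B ∈ blocks s) :
    B.Nonempty := by
  obtain ⟨a, -, rfl⟩ := Finset.mem_image.mp hB
  exact ⟨a, mem_classOf_self s a⟩

/-- The restriction of a setoid to a finset `B`, transported to `Fin B.card`. -/
def restr (s : Setoid (Fin n)) (B : Finset (Fin n)) : Setoid (Fin B.card) :=
  ⟨fun i j => s.r (B.orderEmbOfFin rfl i) (B.orderEmbOfFin rfl j),
   ⟨fun _ => s.iseqv.refl _, fun h => s.iseqv.symm h, fun h h' => s.iseqv.trans h h'⟩⟩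

lemma restr_r (s : Setoid (Fin n)) (B : Finset (Fin n)) (i j : Fin B.card) :
    (restr s B).r i j ↔ s.r (B.orderEmbOfFin rfl i) (B.orderEmbOfFin rfl j) := Iff.rfl

lemma isNC_restr {s : Setoid (Fin n)} (hs : IsNC s) (B : Finset (Fin n)) :
    IsNC (restr s B) := by
  intro a b c d h1 h2 h3 hac hbd
  exact hs _ _ _ _ ((B.orderEmbOfFin rfl).strictMono h1)
    ((B.orderEmbOfFin rfl).strictMono h2) ((B.orderEmbOfFin rfl).strictMono h3) hac hbd

lemma emb_symm_apply (B : Finset (Fin n)) {x : Fin n} (hx : x ∈ B) :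
    B.orderEmbOfFin rfl ((B.orderIsoOfFin rfl).symm ⟨x, hx⟩) = x :=
  congrArg Subtype.val ((B.orderIsoOfFin rfl).apply_symm_apply ⟨x, hx⟩)

lemma symm_emb_apply (B : Finset (Fin n)) (i : Fin B.card)
    (h : B.orderEmbOfFin rfl i ∈ B := Finset.orderEmbOfFin_mem B rfl i) :
    (B.orderIsoOfFin rfl).symm ⟨B.orderEmbOfFin rfl i, h⟩ = i := by
  rw [(B.orderIsoOfFin rfl).symm_apply_eq]
  exact Subtype.ext rfl

lemma min'_image_emb (B : Finset (Fin n)) (T : Finset (Fin B.card)) (h : T.Nonempty)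
    (h' : (T.image fun j => B.orderEmbOfFin rfl j).Nonempty) :
    (T.image fun j => B.orderEmbOfFin rfl j).min' h' = B.orderEmbOfFin rfl (T.min' h) := by
  apply le_antisymm
  · exact Finset.min'_le _ _ (Finset.mem_image_of_mem _ (T.min'_mem h))
  · apply Finset.le_min'
    intro y hy
    obtain ⟨j, hj, rfl⟩ := Finset.mem_image.mp hy
    exact (B.orderEmbOfFin rfl).monotone (T.min'_le j hj)

lemma permOf_restr {s : Setoid (Fin n)} {B : Finset (Fin n)}
    (hsub : ∀ x ∈ B, ∀ y, s.r x y → y ∈ B) (j : Fin B.card) :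
    permOf s (B.orderEmbOfFin rfl j) = B.orderEmbOfFin rfl (permOf (restr s B) j) := by
  rw [permOf_apply, permOf_apply, nextFun_def, nextFun_def]
  have hC : (Finset.univ.filter fun a => s.r (B.orderEmbOfFin rfl j) a)
      = (Finset.univ.filter fun i => (restr s B).r j i).image fun i => B.orderEmbOfFin rfl i := by
    ext x
    simp only [Finset.mem_filter, Finset.mem_univ, true_and, Finset.mem_image]
    constructor
    · intro hx
      have hxB : x ∈ B := hsub _ (Finset.orderEmbOfFin_mem B rfl j) x hx
      refine ⟨(B.orderIsoOfFin rfl).symm ⟨x, hxB⟩, ?_, emb_symm_apply B hxB⟩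
      rw [restr_r, emb_symm_apply B hxB]
      exact hx
    · rintro ⟨i, hi, rfl⟩
      exact hi
  have hA : ((Finset.univ.filter fun a => s.r (B.orderEmbOfFin rfl j) a).filter
        fun a => B.orderEmbOfFin rfl j < a)
      = ((Finset.univ.filter fun i => (restr s B).r j i).filter fun i => j < i).image
          fun i => B.orderEmbOfFin rfl i := by
    rw [hC]
    ext x
    simp only [Finset.mem_filter, Finset.mem_image]
    constructor
    · rintro ⟨⟨i, hi, rfl⟩, hlt⟩
      exact ⟨i, ⟨hi, (B.orderEmbOfFin rfl).lt_iff_lt.mp hlt⟩, rfl⟩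
    · rintro ⟨i, ⟨hi, hlt⟩, rfl⟩
      exact ⟨⟨i, hi, rfl⟩, (B.orderEmbOfFin rfl).strictMono hlt⟩
  have key : ∀ {S S' : Finset (Fin n)} (h : S = S') (hs : S.Nonempty) (hs' : S'.Nonempty),
      S.min' hs = S'.min' hs' := by
    intro S S' h hs hs'
    subst h; rfl
  split_ifs with h₁ h₂ h₂
  · exact (key hA _ (h₂.image _)).trans (min'_image_emb _ _ h₂ (h₂.image _))
  · exact absurd (by rw [hA, Finset.image_nonempty] at h₁; exact h₁) h₂
  · exact absurd (by rw [hA]; exact h₂.image _) h₁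
  · have hj : (Finset.univ.filter fun i => (restr s B).r j i).Nonempty :=
      ⟨j, Finset.mem_filter.mpr ⟨Finset.mem_univ _, (restr s B).iseqv.refl j⟩⟩
    exact (key hC _ (hj.image _)).trans (min'_image_emb _ _ hj (hj.image _))

lemma permOf_restr_inv {s : Setoid (Fin n)} {B : Finset (Fin n)}
    (hsub : ∀ x ∈ B, ∀ y, s.r x y → y ∈ B) (j : Fin B.card) :
    (permOf s)⁻¹ (B.orderEmbOfFin rfl j) = B.orderEmbOfFin rfl ((permOf (restr s B))⁻¹ j) := by
  have h := permOf_restr hsub ((permOf (restr s B))⁻¹ j)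
  rw [perm_apply_inv_self] at h
  rw [← h, perm_inv_apply_self]

end Aux2
section Aux3

variable {n : ℕ}

lemma pow_transport {B : Finset (Fin n)} {σ : Equiv.Perm (Fin n)} {τ : Equiv.Perm (Fin B.card)}
    (hcomm : ∀ j, σ (B.orderEmbOfFin rfl j) = B.orderEmbOfFin rfl (τ j)) :
    ∀ (i : ℕ) (j : Fin B.card), (σ ^ i) (B.orderEmbOfFin rfl j) = B.orderEmbOfFin rfl ((τ ^ i) j) := by
  intro i
  induction i with
  | zero => intro j; simp
  | succ m ih =>
    intro j
    rw [pow_succ, pow_succ]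
    simp only [Equiv.Perm.mul_apply]
    rw [hcomm j]
    exact ih (τ j)

lemma inv_transport {B : Finset (Fin n)} {σ : Equiv.Perm (Fin n)} {τ : Equiv.Perm (Fin B.card)}
    (hcomm : ∀ j, σ (B.orderEmbOfFin rfl j) = B.orderEmbOfFin rfl (τ j)) (j : Fin B.card) :
    σ⁻¹ (B.orderEmbOfFin rfl j) = B.orderEmbOfFin rfl (τ⁻¹ j) := by
  have h := hcomm (τ⁻¹ j)
  rw [perm_apply_inv_self] at h
  rw [← h, perm_inv_apply_self]

lemma zpow_transport {B : Finset (Fin n)} {σ : Equiv.Perm (Fin n)} {τ : Equiv.Perm (Fin B.card)}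
    (hcomm : ∀ j, σ (B.orderEmbOfFin rfl j) = B.orderEmbOfFin rfl (τ j)) :
    ∀ (z : ℤ) (j : Fin B.card), (σ ^ z) (B.orderEmbOfFin rfl j) = B.orderEmbOfFin rfl ((τ ^ z) j) := by
  intro z j
  cases z with
  | ofNat m => rw [Int.ofNat_eq_coe, zpow_natCast, zpow_natCast]; exact pow_transport hcomm m j
  | negSucc m =>
    rw [zpow_negSucc, zpow_negSucc, ← inv_pow, ← inv_pow]
    exact pow_transport (inv_transport hcomm) (m + 1) j

lemma sameCycle_transport {B : Finset (Fin n)} {σ : Equiv.Perm (Fin n)}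
    {τ : Equiv.Perm (Fin B.card)}
    (hcomm : ∀ j, σ (B.orderEmbOfFin rfl j) = B.orderEmbOfFin rfl (τ j)) (i j : Fin B.card) :
    σ.SameCycle (B.orderEmbOfFin rfl i) (B.orderEmbOfFin rfl j) ↔ τ.SameCycle i j := by
  constructor
  · rintro ⟨z, hz⟩
    refine ⟨z, (B.orderEmbOfFin rfl).injective ?_⟩
    rw [← zpow_transport hcomm z i, hz]
  · rintro ⟨z, hz⟩
    exact ⟨z, by rw [zpow_transport hcomm z i, hz]⟩

lemma restr_topS {t : Setoid (Fin n)} {B : Finset (Fin n)} (hB : B ∈ blocks t) :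
    restr t B = topS B.card := by
  apply Setoid.ext
  intro i j
  show (restr t B).r i j ↔ True
  rw [iff_true]
  obtain ⟨a, -, rfl⟩ := Finset.mem_image.mp hB
  have hi := (Finset.mem_filter.mp (Finset.orderEmbOfFin_mem _ rfl i)).2
  have hj := (Finset.mem_filter.mp (Finset.orderEmbOfFin_mem _ rfl j)).2
  exact t.iseqv.trans (t.iseqv.symm hi) hj

lemma restr_relKreweras {s t : Setoid (Fin n)} (hst : s ≤ t) {B : Finset (Fin n)}
    (hB : B ∈ blocks t) : restr (relKreweras s t) B = kreweras (restr s B) := by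
  have hsubt : ∀ x ∈ B, ∀ y, t.r x y → y ∈ B := fun x hx y hxy => mem_of_mem_block hB hx hxy
  have hsubs : ∀ x ∈ B, ∀ y, s.r x y → y ∈ B := fun x hx y hxy =>
    hsubt x hx y (Setoid.le_def.mp hst hxy)
  have hcomm : ∀ j, ((permOf s)⁻¹ * permOf t) (B.orderEmbOfFin rfl j)
      = B.orderEmbOfFin rfl (((permOf (restr s B))⁻¹ * permOf (restr t B)) j) := by
    intro j
    simp only [Equiv.Perm.mul_apply]
    rw [permOf_restr hsubt j]
    exact permOf_restr_inv hsubs _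
  apply Setoid.ext
  intro i j
  have h1 : (restr (relKreweras s t) B).r i j
      ↔ Equiv.Perm.SameCycle ((permOf s)⁻¹ * permOf t)
          (B.orderEmbOfFin rfl i) (B.orderEmbOfFin rfl j) := Iff.rfl
  rw [h1, sameCycle_transport hcomm i j]
  unfold kreweras
  rw [restr_topS hB]
  exact Iff.rfl

lemma relKreweras_le {s t : Setoid (Fin n)} (hst : s ≤ t) : relKreweras s t ≤ t := by
  set σ := (permOf s)⁻¹ * permOf t with hσ
  have hfwd : ∀ a, t.r a (σ a) := by
    intro a
    have h1 : t.r a (permOf t a) := rel_permOf t a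
    have h2 : s.r ((permOf s)⁻¹ (permOf t a)) (permOf t a) := rel_permOf_inv s _
    exact t.iseqv.trans h1 (t.iseqv.symm (Setoid.le_def.mp hst h2))
  have hbwd : ∀ a, t.r a (σ⁻¹ a) := by
    intro a
    have hinv : σ⁻¹ a = (permOf t)⁻¹ (permOf s a) := by
      rw [hσ, mul_inv_rev, inv_inv]; rfl
    rw [hinv]
    have h1 : t.r a (permOf s a) := Setoid.le_def.mp hst (rel_permOf s a)
    have h2 : t.r ((permOf t)⁻¹ (permOf s a)) (permOf s a) := rel_permOf_inv t _
    exact t.iseqv.trans h1 (t.iseqv.symm h2)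
  have hpow : ∀ (τ : Equiv.Perm (Fin n)), (∀ a, t.r a (τ a)) → ∀ (i : ℕ) (a : Fin n),
      t.r a ((τ ^ i) a) := by
    intro τ hτ i
    induction i with
    | zero => intro a; simpa using t.iseqv.refl a
    | succ m ih =>
      intro a
      rw [pow_succ']
      simp only [Equiv.Perm.mul_apply]
      exact t.iseqv.trans (ih a) (hτ ((τ ^ m) a))
  rw [Setoid.le_def]
  intro x y hxy
  obtain ⟨z, hz⟩ := hxy
  have : t.r x ((σ ^ z) x) := by
    cases z with
    | ofNat m => rw [Int.ofNat_eq_coe, zpow_natCast]; exact hpow σ hfwd m x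
    | negSucc m =>
      rw [zpow_negSucc, ← inv_pow]
      exact hpow σ⁻¹ hbwd (m + 1) x
  rwa [hz] at this

end Aux3
section Aux4

variable {n k : ℕ}

lemma Ygen_congr {m m' : ℕ} (h : m = m') {v : Fin m → Fin k} {v' : Fin m' → Fin k}
    (hv : ∀ i : Fin m, v i = v' (Fin.cast h i)) : (Ygen ⟨m, v⟩ : Yalg k) = Ygen ⟨m', v'⟩ := by
  subst h
  have hvv : v = v' := funext fun i => hv i
  rw [hvv]

lemma subword_image (w : Fin n → Fin k) (B : Finset (Fin n)) (A : Finset (Fin B.card)) :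
    (Ygen ⟨(A.image fun j => B.orderEmbOfFin rfl j).card,
        subword w (A.image fun j => B.orderEmbOfFin rfl j)⟩ : Yalg k)
      = Ygen ⟨A.card, subword (subword w B) A⟩ := by
  have hcard : (A.image fun j => B.orderEmbOfFin rfl j).card = A.card :=
    Finset.card_image_of_injective _ (B.orderEmbOfFin rfl).injective
  apply Ygen_congr hcard
  intro i
  have hkey : (fun i : Fin (A.image fun j => B.orderEmbOfFin rfl j).card =>
      B.orderEmbOfFin rfl (A.orderEmbOfFin rfl (Fin.cast hcard i)))
      = (A.image fun j => B.orderEmbOfFin rfl j).orderEmbOfFin rfl := by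
    apply Finset.orderEmbOfFin_unique
    · intro x
      exact Finset.mem_image_of_mem _ (Finset.orderEmbOfFin_mem _ rfl _)
    · intro a b hab
      exact (B.orderEmbOfFin rfl).strictMono ((A.orderEmbOfFin rfl).strictMono hab)
  show w ((A.image fun j => B.orderEmbOfFin rfl j).orderEmbOfFin rfl i)
      = w (B.orderEmbOfFin rfl (A.orderEmbOfFin rfl (Fin.cast hcard i)))
  rw [← hkey]

lemma Yprod_factor (w : Fin n → Fin k) (ρ s : Setoid (Fin n)) (hs : s ≤ ρ) :
    Yprod w s = ∏ B ∈ blocks ρ, Yprod (subword w B) (restr s B) := by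
  have hle : ∀ {x y : Fin n}, s.r x y → ρ.r x y := fun h => Setoid.le_def.mp hs h
  have him : blocks s = (blocks ρ).biUnion fun B =>
      (blocks (restr s B)).image fun A => A.image fun j => B.orderEmbOfFin rfl j := by
    ext X
    simp only [Finset.mem_biUnion]
    constructor
    · intro hX
      obtain ⟨a, -, rfl⟩ := Finset.mem_image.mp hX
      refine ⟨Finset.univ.filter fun y => ρ.r a y, classOf_mem_blocks ρ a, ?_⟩
      set B := Finset.univ.filter fun y => ρ.r a y with hBdef
      have haB : a ∈ B := mem_classOf_self ρ a
      have hXeq : (Finset.univ.filter fun y => s.r a y)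
          = (Finset.univ.filter fun j =>
              (restr s B).r ((B.orderIsoOfFin rfl).symm ⟨a, haB⟩) j).image
                fun j => B.orderEmbOfFin rfl j := by
        ext x
        simp only [Finset.mem_filter, Finset.mem_univ, true_and, Finset.mem_image]
        constructor
        · intro hx
          have hxB : x ∈ B := Finset.mem_filter.mpr ⟨Finset.mem_univ _, hle hx⟩
          refine ⟨(B.orderIsoOfFin rfl).symm ⟨x, hxB⟩, ?_, emb_symm_apply B hxB⟩
          rw [restr_r, emb_symm_apply B haB, emb_symm_apply B hxB]
          exact hx
        · rintro ⟨j, hj, rfl⟩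
          rw [restr_r, emb_symm_apply B haB] at hj
          exact hj
      rw [hXeq]
      exact Finset.mem_image_of_mem _ (classOf_mem_blocks _ _)
    · rintro ⟨B, hB, hX⟩
      obtain ⟨A, hA, rfl⟩ := Finset.mem_image.mp hX
      obtain ⟨i, -, rfl⟩ := Finset.mem_image.mp hA
      have hXeq : (Finset.univ.filter fun j => (restr s B).r i j).image
            (fun j => B.orderEmbOfFin rfl j)
          = Finset.univ.filter fun y => s.r (B.orderEmbOfFin rfl i) y := by
        ext x
        simp only [Finset.mem_filter, Finset.mem_univ, true_and, Finset.mem_image]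
        constructor
        · rintro ⟨j, hj, rfl⟩
          exact hj
        · intro hx
          have hxB : x ∈ B := mem_of_mem_block hB (Finset.orderEmbOfFin_mem B rfl i) (hle hx)
          refine ⟨(B.orderIsoOfFin rfl).symm ⟨x, hxB⟩, ?_, emb_symm_apply B hxB⟩
          rw [restr_r, emb_symm_apply B hxB]
          exact hx
      rw [hXeq]
      exact classOf_mem_blocks s _
  have hdisj : Set.PairwiseDisjoint ↑(blocks ρ) fun B =>
      (blocks (restr s B)).image fun A => A.image fun j => B.orderEmbOfFin rfl j := by
    intro B₁ h₁ B₂ h₂ hne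
    rw [Function.onFun, Finset.disjoint_left]
    intro X hX₁ hX₂
    obtain ⟨A₁, hA₁, rfl⟩ := Finset.mem_image.mp hX₁
    obtain ⟨A₂, hA₂, hEq⟩ := Finset.mem_image.mp hX₂
    obtain ⟨i, hi⟩ := block_nonempty hA₁
    have hx₁ : B₁.orderEmbOfFin rfl i ∈ B₁ := Finset.orderEmbOfFin_mem _ rfl i
    have hmem : B₁.orderEmbOfFin rfl i ∈ A₂.image fun j => B₂.orderEmbOfFin rfl j :=
      hEq ▸ Finset.mem_image_of_mem _ hi
    obtain ⟨j, -, hj⟩ := Finset.mem_image.mp hmem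
    have hx₂ : B₁.orderEmbOfFin rfl i ∈ B₂ := hj ▸ Finset.orderEmbOfFin_mem _ rfl j
    exact hne ((block_eq_classOf (Finset.mem_coe.mp h₁) hx₁).trans
      (block_eq_classOf (Finset.mem_coe.mp h₂) hx₂).symm)
  rw [Yprod, him, Finset.prod_biUnion hdisj]
  refine Finset.prod_congr rfl fun B hB => ?_
  rw [Yprod, Finset.prod_image fun A₁ _ A₂ _ h =>
    Finset.image_injective (B.orderEmbOfFin rfl).injective h]
  exact Finset.prod_congr rfl fun A _ => subword_image w B A

end Aux4
section Aux5

variable {n k : ℕ}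

/-- Glue a family of non-crossing partitions of the blocks of `ρ` into a partition of `Fin n`. -/
def glueS (ρ : NC n) (g : ∀ B : {x // x ∈ blocks ρ.1}, NC B.1.card) : Setoid (Fin n) where
  r x y := ρ.1.r x y ∧ ∀ (B : Finset (Fin n)) (hB : B ∈ blocks ρ.1) (hx : x ∈ B) (hy : y ∈ B),
      (g ⟨B, hB⟩).1.r ((B.orderIsoOfFin rfl).symm ⟨x, hx⟩) ((B.orderIsoOfFin rfl).symm ⟨y, hy⟩)
  iseqv := by
    refine ⟨fun x => ⟨ρ.1.iseqv.refl x, fun B hB hx hy => (g ⟨B, hB⟩).1.iseqv.refl _⟩,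
      fun {x y} h => ⟨ρ.1.iseqv.symm h.1, fun B hB hy hx => (g ⟨B, hB⟩).1.iseqv.symm
        (h.2 B hB hx hy)⟩, fun {x y z} h h' => ⟨ρ.1.iseqv.trans h.1 h'.1, ?_⟩⟩
    intro B hB hx hz
    have hy : y ∈ B := mem_of_mem_block hB hx h.1
    exact (g ⟨B, hB⟩).1.iseqv.trans (h.2 B hB hx hy) (h'.2 B hB hy hz)

lemma glueS_le (ρ : NC n) (g : ∀ B : {x // x ∈ blocks ρ.1}, NC B.1.card) :
    glueS ρ g ≤ ρ.1 :=
  Setoid.le_def.mpr fun h => h.1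

lemma isNC_glueS (ρ : NC n) (g : ∀ B : {x // x ∈ blocks ρ.1}, NC B.1.card) :
    IsNC (glueS ρ g) := by
  intro a b c d h1 h2 h3 hac hbd
  have hab : ρ.1.r a b := ρ.2 a b c d h1 h2 h3 hac.1 hbd.1
  refine ⟨hab, fun B hB ha hb => ?_⟩
  have hc : c ∈ B := mem_of_mem_block hB ha hac.1
  have hd : d ∈ B := mem_of_mem_block hB hb hbd.1
  have hmono : ∀ {x y : Fin n} (hx : x ∈ B) (hy : y ∈ B), x < y →
      (B.orderIsoOfFin rfl).symm ⟨x, hx⟩ < (B.orderIsoOfFin rfl).symm ⟨y, hy⟩ := by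
    intro x y hx hy hxy
    exact (B.orderIsoOfFin rfl).symm.lt_iff_lt.mpr (Subtype.mk_lt_mk.mpr hxy)
  exact (g ⟨B, hB⟩).2 _ _ _ _ (hmono ha hb h1) (hmono hb hc h2) (hmono hc hd h3)
    (hac.2 B hB ha hc) (hbd.2 B hB hb hd)

lemma restr_glueS (ρ : NC n) (g : ∀ B : {x // x ∈ blocks ρ.1}, NC B.1.card)
    {B : Finset (Fin n)} (hB : B ∈ blocks ρ.1) : restr (glueS ρ g) B = (g ⟨B, hB⟩).1 := by
  apply Setoid.ext
  intro i j
  have hiB : B.orderEmbOfFin rfl i ∈ B := Finset.orderEmbOfFin_mem B rfl i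
  have hjB : B.orderEmbOfFin rfl j ∈ B := Finset.orderEmbOfFin_mem B rfl j
  constructor
  · intro h
    have h2 := h.2 B hB hiB hjB
    rwa [symm_emb_apply, symm_emb_apply] at h2
  · intro h
    have hρ : ρ.1.r (B.orderEmbOfFin rfl i) (B.orderEmbOfFin rfl j) := by
      have hmem : B.orderEmbOfFin rfl j ∈ Finset.univ.filter
          fun z => ρ.1.r (B.orderEmbOfFin rfl i) z := by
        rw [← block_eq_classOf hB hiB]
        exact hjB
      exact (Finset.mem_filter.mp hmem).2
    refine ⟨hρ, fun B' hB' hx hy => ?_⟩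
    have hBB : B' = B := (block_eq_classOf hB' hx).trans (block_eq_classOf hB hiB).symm
    subst hBB
    rw [symm_emb_apply, symm_emb_apply]
    exact h
  
lemma glueS_restr (ρ π : NC n) (hπ : π.1 ≤ ρ.1)
    (g : ∀ B : {x // x ∈ blocks ρ.1}, NC B.1.card)
    (hg : ∀ B : {x // x ∈ blocks ρ.1}, (g B).1 = restr π.1 B.1) :
    glueS ρ g = π.1 := by
  apply Setoid.ext
  intro x y
  constructor
  · rintro ⟨hρ, hall⟩
    have hx : x ∈ Finset.univ.filter fun z => ρ.1.r x z := mem_classOf_self ρ.1 x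
    have hy : y ∈ Finset.univ.filter fun z => ρ.1.r x z :=
      Finset.mem_filter.mpr ⟨Finset.mem_univ _, hρ⟩
    have h := hall _ (classOf_mem_blocks ρ.1 x) hx hy
    rw [hg] at h
    have h' : π.1.r ((Finset.univ.filter fun z => ρ.1.r x z).orderEmbOfFin rfl
        (((Finset.univ.filter fun z => ρ.1.r x z).orderIsoOfFin rfl).symm ⟨x, hx⟩))
        ((Finset.univ.filter fun z => ρ.1.r x z).orderEmbOfFin rfl
        (((Finset.univ.filter fun z => ρ.1.r x z).orderIsoOfFin rfl).symm ⟨y, hy⟩)) := h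
    rwa [emb_symm_apply, emb_symm_apply] at h'
  · intro h
    refine ⟨Setoid.le_def.mp hπ h, fun B hB hx hy => ?_⟩
    rw [hg]
    show π.1.r (B.orderEmbOfFin rfl ((B.orderIsoOfFin rfl).symm ⟨x, hx⟩))
      (B.orderEmbOfFin rfl ((B.orderIsoOfFin rfl).symm ⟨y, hy⟩))
    rwa [emb_symm_apply, emb_symm_apply]

instance : Subsingleton (Setoid (Fin 1)) :=
  ⟨fun s t => Setoid.ext fun a b => by
    have hab : a = b := Subsingleton.elim a b
    subst hab
    exact iff_of_true (s.iseqv.refl a) (t.iseqv.refl a)⟩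

instance : Subsingleton (NC 1) := ⟨fun a b => Subtype.ext (Subsingleton.elim _ _)⟩

lemma Ygen_eq_one {m : ℕ} (hm : m ≤ 1) (v : Fin m → Fin k) : (Ygen ⟨m, v⟩ : Yalg k) = 1 :=
  dif_neg (show ¬2 ≤ m by omega)

lemma Yprod_card_one (v : Fin 1 → Fin k) (s : Setoid (Fin 1)) : Yprod v s = 1 :=
  Finset.prod_eq_one fun B _ => Ygen_eq_one
    (le_trans (Finset.card_le_univ B) (by simp)) _

lemma Δk_Ygen (m : ℕ) (hm : 1 ≤ m) (v : Fin m → Fin k) :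
    Δk k (Ygen ⟨m, v⟩) = ∑ π : NC m, Yprod v π.1 ⊗ₜ[ℂ] Yprod v (kreweras π.1) := by
  rcases eq_or_lt_of_le hm with h1 | h2
  · subst h1
    rw [Ygen_eq_one le_rfl, map_one]
    have hsum : ∑ π : NC 1, Yprod v π.1 ⊗ₜ[ℂ] Yprod v (kreweras π.1)
        = Yprod v (ncBot 1).1 ⊗ₜ[ℂ] Yprod v (kreweras (ncBot 1).1) :=
      Fintype.sum_subsingleton _ (ncBot 1)
    rw [hsum, Yprod_card_one, Yprod_card_one]
    exact Algebra.TensorProduct.one_def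
  · have h2' : 2 ≤ m := h2
    rw [show (Ygen ⟨m, v⟩ : Yalg k) = MvPolynomial.X ⟨⟨m, v⟩, h2'⟩ from dif_pos h2']
    rw [Δk, MvPolynomial.aeval_X]

lemma prod_tmul_prod {ι : Type} (s : Finset ι) (f g : ι → Yalg k) :
    (∏ i ∈ s, f i ⊗ₜ[ℂ] g i) = (∏ i ∈ s, f i) ⊗ₜ[ℂ] ∏ i ∈ s, g i := by
  classical
  induction s using Finset.cons_induction with
  | empty => simp [Algebra.TensorProduct.one_def]
  | cons a s ha ih =>
    rw [Finset.prod_cons, Finset.prod_cons, Finset.prod_cons, ih,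
      Algebra.TensorProduct.tmul_mul_tmul]

end Aux5
/-- Lemma 3.3.  For `w ∈ [k]*` with `|w| = n ≥ 2` and `ρ ∈ NC(n)`,
`Δ(Y_{w;ρ}) = ∑_{π ∈ NC(n), π ≤ ρ} Y_{w;π} ⊗ Y_{w;K_ρ(π)}`. -/
theorem comul_Yprod (k n : ℕ) (hk : 1 ≤ k) (hn : 2 ≤ n) (w : Fin n → Fin k) (ρ : NC n) :
    Δk k (Yprod w ρ.1) =
      ∑ π ∈ Finset.univ.filter (fun π : NC n => π ≤ ρ),
        Yprod w π.1 ⊗ₜ[ℂ] Yprod w (relKreweras π.1 ρ.1) := by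
  classical
  rw [Yprod, map_prod]
  rw [Finset.prod_congr rfl fun B hB => Δk_Ygen B.card
    (Finset.card_pos.mpr (block_nonempty hB)) (subword w B)]
  rw [← Finset.prod_attach (blocks ρ.1) fun B => ∑ π : NC B.card,
    Yprod (subword w B) π.1 ⊗ₜ[ℂ] Yprod (subword w B) (kreweras π.1)]
  rw [← Finset.univ_eq_attach, Finset.prod_univ_sum, Fintype.piFinset_univ]
  refine Finset.sum_bij' (fun g _ => (⟨glueS ρ g, isNC_glueS ρ g⟩ : NC n))
    (fun π _ => fun B => (⟨restr π.1 B.1, isNC_restr π.2 B.1⟩ : NC B.1.card))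
    (fun g _ => Finset.mem_filter.mpr ⟨Finset.mem_univ _, glueS_le ρ g⟩)
    (fun π _ => Finset.mem_univ _)
    (fun g _ => ?_) (fun π hπ => ?_) (fun g _ => ?_)
  · funext B
    exact Subtype.ext (restr_glueS ρ g B.2)
  · refine Subtype.ext ?_
    show glueS ρ (fun B => ⟨restr π.1 B.1, isNC_restr π.2 B.1⟩) = π.1
    exact glueS_restr ρ π (Finset.mem_filter.mp hπ).2 _ fun B => rfl
  · rw [prod_tmul_prod]
    congr 1
    · rw [Yprod_factor w ρ.1 (glueS ρ g) (glueS_le ρ g), ← Finset.prod_attach (blocks ρ.1),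
        ← Finset.univ_eq_attach]
      exact Finset.prod_congr rfl fun B _ => by rw [restr_glueS ρ g B.2]
    · rw [Yprod_factor w ρ.1 (relKreweras (glueS ρ g) ρ.1) (relKreweras_le (glueS_le ρ g)),
        ← Finset.prod_attach (blocks ρ.1), ← Finset.univ_eq_attach]
      refine Finset.prod_congr rfl fun B _ => ?_
      rw [restr_relKreweras (glueS_le ρ g) B.2, restr_glueS ρ g B.2]

end FreeProb

end
end

section
/- Let k ≥ 1, let μ ∈ G_k and μ₁ ∈ G_1 be such that Cf_{(i_1,…,i_n)}(R_μ) = Cf_{(1,…,1)}(R_{μ₁}) for all n ≥ 1 and all 1 ≤ i_1,…,i_n ≤ k (i.e. R_μ(z_1,…,z_k) = R_{μ₁}(z_1+⋯+z_k); this holds when μ is the distribution of a repeated k-tuple (a,…,a) and μ₁ is the distribution of a, with φ(a) = 1). Then Cf_{(i_1,…,i_n)}(LS_μ) = Cf_{(1,…,1)}(LS_{μ₁}) for all n ≥ 2 and all indices; that is, LS_μ(z_1,…,z_k) = LS_{μ₁}(z_1+⋯+z_k). -/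
open scoped TensorProduct

noncomputable section

namespace FreeProb

attribute [local instance] Classical.propDecidable

/-! ### Convolution of linear functionals on a bialgebra -/

variable {A : Type} [CommRing A] [Algebra ℂ A]

/-- The algebra map `Y^(k) → Y^(1)` collapsing all letters to a single letter. -/
def Tmap (k : ℕ) : Yalg k →ₐ[ℂ] Yalg 1 :=
  MvPolynomial.aeval fun q : {p : WordIdx k // 2 ≤ p.1} =>
    Ygen ⟨q.1.1, fun _ => (0 : Fin 1)⟩

lemma Tmap_Ygen (k : ℕ) (p : WordIdx k) :
    Tmap k (Ygen p) = Ygen ⟨p.1, fun _ => (0 : Fin 1)⟩ := by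
  unfold Ygen
  by_cases hp : 2 ≤ p.1
  · rw [dif_pos hp]
    exact MvPolynomial.aeval_X _ _
  · rw [dif_neg hp, map_one, dif_neg hp]

lemma Tmap_Yprod {k n : ℕ} (w : Fin n → Fin k) (s : Setoid (Fin n)) :
    Tmap k (Yprod w s) = Yprod (fun _ => (0 : Fin 1)) s := by
  unfold Yprod
  rw [map_prod]
  exact Finset.prod_congr rfl fun B _ => Tmap_Ygen k _

lemma Δ_comm (k : ℕ) :
    (Algebra.TensorProduct.map (Tmap k) (Tmap k)).comp (Δk k)
      = (Δk 1).comp (Tmap k) := by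
  apply MvPolynomial.algHom_ext
  intro q
  simp only [AlgHom.comp_apply]
  have h1 : (Δk k) (MvPolynomial.X q) =
      ∑ π : NC q.1.1, Yprod q.1.2 π.1 ⊗ₜ[ℂ] Yprod q.1.2 (kreweras π.1) :=
    MvPolynomial.aeval_X _ q
  have h2 : Tmap k (MvPolynomial.X q) = Ygen ⟨q.1.1, fun _ => (0 : Fin 1)⟩ :=
    MvPolynomial.aeval_X _ q
  rw [h1, map_sum, h2]
  unfold Ygen
  rw [dif_pos q.2]
  rw [show (Δk 1) (MvPolynomial.X ⟨⟨q.1.1, fun _ => (0 : Fin 1)⟩, q.2⟩) = _ from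
    MvPolynomial.aeval_X _ _]
  exact Finset.sum_congr rfl fun π _ => by
    rw [Algebra.TensorProduct.map_tmul, Tmap_Yprod, Tmap_Yprod]

lemma Δ_comm_apply (k : ℕ) (x : Yalg k) :
    (Δk 1) (Tmap k x) = Algebra.TensorProduct.map (Tmap k) (Tmap k) ((Δk k) x) := by
  have := congrArg (fun f : Yalg k →ₐ[ℂ] Yalg 1 ⊗[ℂ] Yalg 1 => f x) (Δ_comm k)
  exact this.symm

lemma convF_comp (k : ℕ) (ξ η : Yalg 1 →ₗ[ℂ] ℂ) :
    convF (Δk 1) ξ η ∘ₗ (Tmap k).toLinearMap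
      = convF (Δk k) (ξ ∘ₗ (Tmap k).toLinearMap) (η ∘ₗ (Tmap k).toLinearMap) := by
  apply LinearMap.ext
  intro x
  simp only [LinearMap.comp_apply, convF, AlgHom.toLinearMap_apply]
  rw [Δ_comm_apply]
  congr 1
  induction (Δk k) x using TensorProduct.induction_on with
  | zero => simp
  | tmul a b => simp [Algebra.TensorProduct.map_tmul]
  | add a b iha ihb => simp only [map_add, iha, ihb]

lemma convPowF_comp (k : ℕ) (ξ : Yalg 1 →ₗ[ℂ] ℂ) :
    ∀ m : ℕ,
      convPowF (Δk 1) (εk 1).toLinearMap ξ m ∘ₗ (Tmap k).toLinearMap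
        = convPowF (Δk k) ((εk 1).toLinearMap ∘ₗ (Tmap k).toLinearMap)
            (ξ ∘ₗ (Tmap k).toLinearMap) m
  | 0 => rfl
  | m + 1 => by
      show convF (Δk 1) (convPowF (Δk 1) (εk 1).toLinearMap ξ m) ξ ∘ₗ (Tmap k).toLinearMap = _
      rw [convF_comp, convPowF_comp k ξ m]
      rfl

lemma ε_comm (k : ℕ) : (εk 1).comp (Tmap k) = εk k := by
  apply MvPolynomial.algHom_ext
  intro q
  simp only [AlgHom.comp_apply]
  have h2 : Tmap k (MvPolynomial.X q) = Ygen ⟨q.1.1, fun _ => (0 : Fin 1)⟩ :=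
    MvPolynomial.aeval_X _ q
  rw [h2]
  unfold Ygen
  rw [dif_pos q.2]
  show (εk 1) (MvPolynomial.X _) = (εk k) (MvPolynomial.X q)
  rw [show (εk 1) (MvPolynomial.X ⟨⟨q.1.1, fun _ => (0 : Fin 1)⟩, q.2⟩) = 0 from
      MvPolynomial.aeval_X _ _,
    show (εk k) (MvPolynomial.X q) = 0 from MvPolynomial.aeval_X _ q]

lemma char_comm (k : ℕ) (α : Dist k) (α₁ : Dist 1)
    (h : ∀ (n : ℕ) (w : Fin n → Fin k), 1 ≤ n → α ⟨n, w⟩ = α₁ ⟨n, fun _ => 0⟩) :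
    (charOf α₁).comp (Tmap k) = charOf α := by
  apply MvPolynomial.algHom_ext
  intro q
  simp only [AlgHom.comp_apply]
  have h2 : Tmap k (MvPolynomial.X q) = Ygen ⟨q.1.1, fun _ => (0 : Fin 1)⟩ :=
    MvPolynomial.aeval_X _ q
  rw [h2]
  unfold Ygen
  rw [dif_pos q.2]
  rw [show (charOf α₁) (MvPolynomial.X ⟨⟨q.1.1, fun _ => (0 : Fin 1)⟩, q.2⟩)
        = α₁ ⟨q.1.1, fun _ => 0⟩ from MvPolynomial.aeval_X _ _,
    show (charOf α) (MvPolynomial.X q) = α q.1 from MvPolynomial.aeval_X _ q]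
  exact (h q.1.1 q.1.2 (le_trans one_le_two q.2)).symm

/-- Proposition 5.1.  If `μ ∈ G_k` and `μ₁ ∈ G_1` satisfy
`R_μ(z_1,…,z_k) = R_{μ₁}(z_1 + ⋯ + z_k)` (coefficientwise:
`Cf_{(i_1,…,i_n)}(R_μ) = Cf_{(1,…,1)}(R_{μ₁})` for all words), as happens when `μ` is
the distribution of a repeated `k`-tuple `(a,…,a)` and `μ₁` that of `a`, then
`LS_μ(z_1,…,z_k) = LS_{μ₁}(z_1 + ⋯ + z_k)` (coefficientwise). -/
theorem LS_of_repeated_tuple (k : ℕ) (hk : 1 ≤ k) (μ : Dist k) (μ₁ : Dist 1)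
    (α : Dist k) (α₁ : Dist 1) (hμ : InG μ) (hμ₁ : InG μ₁)
    (hα : IsRTransform μ α) (hα₁ : IsRTransform μ₁ α₁)
    (h : ∀ (n : ℕ) (w : Fin n → Fin k), 1 ≤ n → α ⟨n, w⟩ = α₁ ⟨n, fun _ => 0⟩) :
    ∀ (n : ℕ) (w : Fin n → Fin k), 2 ≤ n →
      logFunF (Δk k) (εk k).toLinearMap (charOf α).toLinearMap (Ygen ⟨n, w⟩) =
        logFunF (Δk 1) (εk 1).toLinearMap (charOf α₁).toLinearMap
          (Ygen ⟨n, fun _ => 0⟩) := by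
  intro n w hn
  have hε : (εk 1).toLinearMap ∘ₗ (Tmap k).toLinearMap = (εk k).toLinearMap := by
    rw [← AlgHom.comp_toLinearMap, ε_comm]
  have hχ : (charOf α₁).toLinearMap ∘ₗ (Tmap k).toLinearMap = (charOf α).toLinearMap := by
    rw [← AlgHom.comp_toLinearMap, char_comm k α α₁ h]
  have hT : Tmap k (Ygen ⟨n, w⟩) = Ygen ⟨n, fun _ => (0 : Fin 1)⟩ := Tmap_Ygen k _
  unfold logFunF
  congr 1
  apply tsum_congr
  intro ℓ
  congr 1
  have := congrArg (fun f : Yalg k →ₗ[ℂ] ℂ => f (Ygen ⟨n, w⟩))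
    (convPowF_comp k ((εk 1).toLinearMap - (charOf α₁).toLinearMap) (ℓ + 1))
  simp only [LinearMap.comp_apply] at this
  rw [LinearMap.sub_comp, hε, hχ] at this
  rw [← hT]
  exact this.symm

end FreeProb

end
end

section
/- Let Sym be the Hopf algebra of symmetric functions over ℂ. (1) If ξ is an infinitesimal character of Sym and u_1, u_2 are homogeneous symmetric functions of degrees ≥ 1, then ξ(u_1 u_2) = 0. (2) If η is a character of Sym and ξ := log η, then ξ(p_n) = η(p_n) for all n ≥ 1. (3) If ξ is an infinitesimal character of Sym, then ξ(y_n) = ((−1)^n/(n−1)) ξ(p_{n−1}) for all n ≥ 2. -/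
open scoped TensorProduct

noncomputable section

namespace FreeProb

attribute [local instance] Classical.propDecidable

/-! ### Convolution of linear functionals on a bialgebra -/

variable {A : Type} [CommRing A] [Algebra ℂ A]

/-! ### Auxiliary lemmas -/

section PSAux

open PowerSeries

variable {R S : Type} [CommRing R] [Algebra ℂ R] [CommRing S] [Algebra ℂ S]

lemma coeff_pow_zero_aux {g : PowerSeries R} (hg : constantCoeff g = 0) :
    ∀ ℓ m : ℕ, m < ℓ → coeff m (g ^ ℓ) = 0 := by
  intro ℓ
  induction ℓ with
  | zero => intro m hm; omega
  | succ ℓ ih =>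
    intro m hm
    rw [pow_succ', coeff_mul]
    apply Finset.sum_eq_zero
    rintro ⟨i, j⟩ hij
    replace hij := Finset.HasAntidiagonal.mem_antidiagonal.mp hij
    rcases Nat.eq_zero_or_pos i with hi | hi
    · subst hi
      have h0 : coeff 0 g = 0 := by rw [coeff_zero_eq_constantCoeff]; exact hg
      rw [h0, zero_mul]
    · rw [ih j (by omega), mul_zero]

lemma coeff_psLog (f : PowerSeries R) (m : ℕ) :
    coeff m (psLog f)
      = ∑ ℓ ∈ Finset.range (m + 1), ((-1 : ℂ) ^ (ℓ + 1) / ℓ) • coeff m ((f - 1) ^ ℓ) :=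
  coeff_mk _ _

lemma coeff_psLog_ext {f : PowerSeries R} (hf : constantCoeff f = 1) {m N : ℕ} (h : m ≤ N) :
    coeff m (psLog f)
      = ∑ ℓ ∈ Finset.range (N + 1), ((-1 : ℂ) ^ (ℓ + 1) / ℓ) • coeff m ((f - 1) ^ ℓ) := by
  rw [coeff_psLog]
  apply Finset.sum_subset (Finset.range_subset_range.2 (by omega))
  intro ℓ _ hℓ
  rw [Finset.mem_range, not_lt] at hℓ
  rw [coeff_pow_zero_aux (by rw [map_sub, hf, map_one, sub_self]) ℓ m (by omega), smul_zero]

lemma psLog_constantCoeff (f : PowerSeries R) : coeff 0 (psLog f) = 0 := by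
  rw [coeff_psLog]
  simp

lemma psLog_one : psLog (1 : PowerSeries R) = 0 := by
  ext m
  rw [coeff_psLog, map_zero]
  apply Finset.sum_eq_zero
  intro ℓ _
  rcases Nat.eq_zero_or_pos ℓ with hℓ | hℓ
  · subst hℓ; simp
  · rw [sub_self, zero_pow (by omega), map_zero, smul_zero]

lemma psLog_deriv {f : PowerSeries R} (hf : constantCoeff f = 1) :
    f * d⁄dX R (psLog f) = d⁄dX R f := by
  have hg : constantCoeff (f - 1) = 0 := by rw [map_sub, hf, map_one, sub_self]
  ext N
  set c : ℕ → ℂ := fun ℓ => (-1 : ℂ) ^ (ℓ + 1) / ℓ with hc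
  set P : PowerSeries R :=
    ∑ ℓ ∈ Finset.range (N + 2), C (algebraMap ℂ R (c ℓ)) * (f - 1) ^ ℓ with hP
  have hcoeffP : ∀ m, m ≤ N + 1 → coeff m (psLog f) = coeff m P := by
    intro m hm
    rw [coeff_psLog_ext hf (show m ≤ N + 1 from hm), hP, map_sum]
    exact Finset.sum_congr rfl fun ℓ _ => by rw [coeff_C_mul, Algebra.smul_def]
  have hderiv : ∀ m, m ≤ N → coeff m (d⁄dX R (psLog f)) = coeff m (d⁄dX R P) := by
    intro m hm
    rw [coeff_derivative, coeff_derivative, hcoeffP (m + 1) (by omega)]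
  have hDP : d⁄dX R P = d⁄dX R f * ∑ j ∈ Finset.range (N + 1), (1 - f) ^ j := by
    rw [hP, map_sum]
    have hterm : ∀ ℓ ∈ Finset.range (N + 2),
        d⁄dX R (C (algebraMap ℂ R (c ℓ)) * (f - 1) ^ ℓ)
          = C (algebraMap ℂ R (c ℓ)) * (ℓ • ((f - 1) ^ (ℓ - 1) * d⁄dX R f)) := by
      intro ℓ _
      rw [Derivation.leibniz, derivative_C, smul_zero, add_zero, smul_eq_mul,
        Derivation.leibniz_pow]
      congr 1
      rw [smul_eq_mul, map_sub, Derivation.map_one_eq_zero, sub_zero]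
    rw [Finset.sum_congr rfl hterm, Finset.sum_range_succ']
    have h0 : C (algebraMap ℂ R (c 0)) * ((0 : ℕ) • ((f - 1) ^ (0 - 1) * d⁄dX R f)) = 0 := by
      rw [zero_smul, mul_zero]
    rw [h0, add_zero, Finset.mul_sum]
    apply Finset.sum_congr rfl
    intro j _
    have hconst : (C (algebraMap ℂ R (c (j + 1))) : PowerSeries R) * ((j + 1 : ℕ) : PowerSeries R)
        = ((-1 : PowerSeries R)) ^ j := by
      have h1 : ((j + 1 : ℕ) : PowerSeries R) = C (algebraMap ℂ R ((j + 1 : ℕ) : ℂ)) := by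
        rw [map_natCast, map_natCast]
      rw [h1, ← map_mul, ← map_mul]
      have h2 : c (j + 1) * ((j + 1 : ℕ) : ℂ) = (-1 : ℂ) ^ j := by
        have hne : ((j + 1 : ℕ) : ℂ) ≠ 0 := Nat.cast_ne_zero.2 (Nat.succ_ne_zero j)
        show (-1 : ℂ) ^ (j + 1 + 1) / ((j + 1 : ℕ) : ℂ) * ((j + 1 : ℕ) : ℂ) = (-1 : ℂ) ^ j
        rw [div_mul_cancel₀ _ hne, pow_succ, pow_succ]
        ring
      rw [h2, map_pow, map_pow, map_neg, map_neg, map_one, map_one]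
    have hpow : ((-1 : PowerSeries R)) ^ j * (f - 1) ^ j = (1 - f) ^ j := by
      rw [← mul_pow]
      congr 1
      ring
    simp only [Nat.add_sub_cancel, nsmul_eq_mul]
    linear_combination (((f - 1) ^ j * d⁄dX R f) * hconst) + ((d⁄dX R f) * hpow)
  have hfS : f * ∑ j ∈ Finset.range (N + 1), (1 - f) ^ j = 1 - (1 - f) ^ (N + 1) := by
    have h := geom_sum_mul (1 - f) (N + 1)
    linear_combination -h
  have hzero : coeff N (d⁄dX R f * (1 - f) ^ (N + 1)) = 0 := by
    rw [coeff_mul]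
    apply Finset.sum_eq_zero
    rintro ⟨i, j⟩ hij
    replace hij := Finset.HasAntidiagonal.mem_antidiagonal.mp hij
    rw [coeff_pow_zero_aux (by rw [map_sub, map_one, hf, sub_self]) (N + 1) j (by omega),
      mul_zero]
  have h1 : coeff N (f * d⁄dX R (psLog f)) = coeff N (f * d⁄dX R P) := by
    rw [coeff_mul, coeff_mul]
    apply Finset.sum_congr rfl
    rintro ⟨i, j⟩ hij
    replace hij := Finset.HasAntidiagonal.mem_antidiagonal.mp hij
    rw [hderiv j (by omega)]
  rw [h1, hDP]
  have h2 : f * (d⁄dX R f * ∑ j ∈ Finset.range (N + 1), (1 - f) ^ j)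
      = d⁄dX R f - d⁄dX R f * (1 - f) ^ (N + 1) := by
    linear_combination (d⁄dX R f) * hfS
  rw [h2, map_sub, hzero, sub_zero]

lemma ps_ext_deriv {f g : PowerSeries R} (h : d⁄dX R f = d⁄dX R g)
    (h0 : coeff 0 f = coeff 0 g) : f = g := by
  ext n
  cases n with
  | zero => exact h0
  | succ n =>
    have h1 : coeff n (d⁄dX R f) = coeff n (d⁄dX R g) := by rw [h]
    rw [coeff_derivative, coeff_derivative] at h1
    have e : (coeff (n + 1) f - coeff (n + 1) g) * ((n : R) + 1) = 0 := by
      rw [sub_mul, h1, sub_self]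
    have e2 : ((n : ℂ) + 1) • (coeff (n + 1) f - coeff (n + 1) g) = 0 := by
      rw [Algebra.smul_def, map_add, map_natCast, map_one, mul_comm]
      exact e
    have hne : ((n : ℂ) + 1) ≠ 0 := Nat.cast_add_one_ne_zero n
    have : coeff (n + 1) f - coeff (n + 1) g = 0 := by
      calc coeff (n + 1) f - coeff (n + 1) g
          = (((n : ℂ) + 1)⁻¹ * ((n : ℂ) + 1)) • (coeff (n + 1) f - coeff (n + 1) g) := by
            rw [inv_mul_cancel₀ hne, one_smul]
        _ = ((n : ℂ) + 1)⁻¹ • (((n : ℂ) + 1) • (coeff (n + 1) f - coeff (n + 1) g)) := by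
            rw [mul_smul]
        _ = 0 := by rw [e2, smul_zero]
    exact sub_eq_zero.mp this

lemma psLog_mul {f g : PowerSeries R} (hf : constantCoeff f = 1)
    (hg : constantCoeff g = 1) : psLog (f * g) = psLog f + psLog g := by
  have hfg : constantCoeff (f * g) = ((1 : Rˣ) : R) := by
    rw [map_mul, hf, hg, mul_one, Units.val_one]
  have hu : (f * g) * invOfUnit (f * g) 1 = 1 := mul_invOfUnit _ _ hfg
  have cancel : ∀ A B : PowerSeries R, (f * g) * A = (f * g) * B → A = B := by
    intro A B hAB
    calc A = ((f * g) * invOfUnit (f * g) 1) * A := by rw [hu, one_mul]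
      _ = invOfUnit (f * g) 1 * ((f * g) * A) := by ring
      _ = invOfUnit (f * g) 1 * ((f * g) * B) := by rw [hAB]
      _ = ((f * g) * invOfUnit (f * g) 1) * B := by ring
      _ = B := by rw [hu, one_mul]
  have keyf : f * d⁄dX R (psLog f) = d⁄dX R f := psLog_deriv hf
  have keyg : g * d⁄dX R (psLog g) = d⁄dX R g := psLog_deriv hg
  have keyfg : (f * g) * d⁄dX R (psLog (f * g)) = d⁄dX R (f * g) :=
    psLog_deriv (by rw [map_mul, hf, hg, mul_one])
  have keyD : d⁄dX R (f * g) = f * d⁄dX R g + g * d⁄dX R f := by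
    rw [Derivation.leibniz, smul_eq_mul, smul_eq_mul]
  apply ps_ext_deriv
  · apply cancel
    rw [keyfg, map_add]
    linear_combination keyD - g * keyf - f * keyg
  · rw [psLog_constantCoeff, map_add, psLog_constantCoeff, psLog_constantCoeff, add_zero]

lemma psLog_map (φ : R →ₐ[ℂ] S) (f : PowerSeries R) :
    PowerSeries.map φ.toRingHom (psLog f) = psLog (PowerSeries.map φ.toRingHom f) := by
  ext m
  rw [coeff_map, coeff_psLog, coeff_psLog, map_sum, AlgHom.toRingHom_eq_coe, RingHom.coe_coe]
  apply Finset.sum_congr rfl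
  intro ℓ _
  rw [map_smul]
  congr 1
  rw [← RingHom.coe_coe φ, ← AlgHom.toRingHom_eq_coe, ← coeff_map, map_pow, map_sub, map_one]

end PSAux

section SymAux

open PowerSeries

lemma constantCoeff_hSym : constantCoeff hSymSeries = 1 := by
  rw [hSymSeries, ← coeff_zero_eq_constantCoeff_apply, coeff_mk, if_pos rfl]

lemma Hgen_zero : Hgen 0 = 1 := by rw [Hgen, dif_neg (by omega)]

lemma coeff_hSym (m : ℕ) : coeff m hSymSeries = ((-1 : ℂ) ^ m) • Hgen m := by
  rw [hSymSeries, coeff_mk]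
  rcases m with _ | m
  · rw [if_pos rfl, Hgen_zero, pow_zero, one_smul]
  · rw [if_neg (Nat.succ_ne_zero m), Algebra.smul_def]
    congr 1
    rw [map_pow, map_neg, map_one]

lemma he_mul : hSymSeries * eSymSeries = 1 :=
  mul_invOfUnit _ 1 (by rw [constantCoeff_hSym, Units.val_one])

lemma constantCoeff_eSym : constantCoeff eSymSeries = 1 := by
  rw [eSymSeries, constantCoeff_invOfUnit, inv_one, Units.val_one]

lemma ΔSym_Hgen (n : ℕ) :
    ΔSym (Hgen n) = ∑ i ∈ Finset.range (n + 1), Hgen i ⊗ₜ[ℂ] Hgen (n - i) := by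
  rcases Nat.eq_zero_or_pos n with hn | hn
  · subst hn
    rw [Hgen_zero, map_one, Finset.sum_range_one, Hgen_zero, Algebra.TensorProduct.one_def]
  · rw [Hgen, dif_pos (show 1 ≤ n from hn), ΔSym, MvPolynomial.aeval_X]

lemma εSym_Hgen {m : ℕ} (hm : 1 ≤ m) : εSym (Hgen m) = 0 := by
  rw [Hgen, dif_pos hm, εSym, MvPolynomial.aeval_X]

lemma map_εSym_hSym : PowerSeries.map εSym.toRingHom hSymSeries = 1 := by
  ext n
  rw [coeff_map, coeff_hSym, coeff_one]
  rcases n with _ | n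
  · rw [if_pos rfl, pow_zero, one_smul, Hgen_zero, AlgHom.toRingHom_eq_coe, RingHom.coe_coe,
      map_one]
  · rw [if_neg (Nat.succ_ne_zero n), AlgHom.toRingHom_eq_coe, RingHom.coe_coe, map_smul,
      εSym_Hgen (by omega), smul_zero]

lemma map_εSym_eSym : PowerSeries.map εSym.toRingHom eSymSeries = 1 := by
  have h : PowerSeries.map εSym.toRingHom hSymSeries * PowerSeries.map εSym.toRingHom eSymSeries
      = 1 := by rw [← map_mul, he_mul, map_one]
  rwa [map_εSym_hSym, one_mul] at h

lemma εSym_eSym {m : ℕ} (hm : 1 ≤ m) : εSym (eSym m) = 0 := by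
  have h := congrArg (coeff m) map_εSym_eSym
  rw [coeff_map, coeff_one, if_neg (by omega)] at h
  rw [eSym]
  exact h

lemma εSym_pSym (m : ℕ) : εSym (pSym m) = 0 := by
  rw [pSym, map_smul]
  have h : εSym (coeff m (psLog eSymSeries)) = 0 := by
    have h1 : εSym (coeff m (psLog eSymSeries))
        = coeff m (PowerSeries.map εSym.toRingHom (psLog eSymSeries)) := by
      rw [coeff_map]; rfl
    rw [h1, psLog_map, map_εSym_eSym, psLog_one, map_zero]
  rw [h, smul_zero]

end SymAux

section DeltaAux

open PowerSeries

private def ι₁ : SymA →ₐ[ℂ] SymA ⊗[ℂ] SymA := Algebra.TensorProduct.includeLeft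
private def ι₂ : SymA →ₐ[ℂ] SymA ⊗[ℂ] SymA := Algebra.TensorProduct.includeRight

lemma map_ΔSym_hSym :
    PowerSeries.map ΔSym.toRingHom hSymSeries
      = PowerSeries.map ι₁.toRingHom hSymSeries * PowerSeries.map ι₂.toRingHom hSymSeries := by
  ext n
  rw [coeff_map, coeff_mul, Finset.Nat.sum_antidiagonal_eq_sum_range_succ_mk, coeff_hSym,
    AlgHom.toRingHom_eq_coe, RingHom.coe_coe, map_smul, ΔSym_Hgen, Finset.smul_sum]
  apply Finset.sum_congr rfl
  intro i hi
  rw [Finset.mem_range] at hi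
  rw [coeff_map, coeff_map, coeff_hSym, coeff_hSym, AlgHom.toRingHom_eq_coe,
    AlgHom.toRingHom_eq_coe, RingHom.coe_coe, RingHom.coe_coe, map_smul, map_smul,
    smul_mul_smul_comm]
  have hpow : (-1 : ℂ) ^ i * (-1 : ℂ) ^ (n - i) = (-1 : ℂ) ^ n := by
    rw [← pow_add]
    congr 1
    omega
  rw [hpow]
  congr 1
  rw [ι₁, ι₂, Algebra.TensorProduct.includeLeft_apply, Algebra.TensorProduct.includeRight_apply,
    Algebra.TensorProduct.tmul_mul_tmul, mul_one, one_mul]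

lemma map_ΔSym_eSym :
    PowerSeries.map ΔSym.toRingHom eSymSeries
      = PowerSeries.map ι₁.toRingHom eSymSeries * PowerSeries.map ι₂.toRingHom eSymSeries := by
  have h1 : PowerSeries.map ΔSym.toRingHom hSymSeries * PowerSeries.map ΔSym.toRingHom eSymSeries
      = 1 := by rw [← map_mul, he_mul, map_one]
  have e1 : PowerSeries.map ι₁.toRingHom hSymSeries * PowerSeries.map ι₁.toRingHom eSymSeries
      = 1 := by rw [← map_mul, he_mul, map_one]
  have e2 : PowerSeries.map ι₂.toRingHom hSymSeries * PowerSeries.map ι₂.toRingHom eSymSeries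
      = 1 := by rw [← map_mul, he_mul, map_one]
  have h2 : PowerSeries.map ΔSym.toRingHom hSymSeries
      * (PowerSeries.map ι₁.toRingHom eSymSeries * PowerSeries.map ι₂.toRingHom eSymSeries)
      = 1 := by
    rw [map_ΔSym_hSym]
    calc (PowerSeries.map ι₁.toRingHom hSymSeries * PowerSeries.map ι₂.toRingHom hSymSeries)
        * (PowerSeries.map ι₁.toRingHom eSymSeries * PowerSeries.map ι₂.toRingHom eSymSeries)
        = (PowerSeries.map ι₁.toRingHom hSymSeries * PowerSeries.map ι₁.toRingHom eSymSeries)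
          * (PowerSeries.map ι₂.toRingHom hSymSeries * PowerSeries.map ι₂.toRingHom eSymSeries) := by
          ring
      _ = 1 := by rw [e1, e2, mul_one]
  calc PowerSeries.map ΔSym.toRingHom eSymSeries
      = PowerSeries.map ΔSym.toRingHom eSymSeries * (PowerSeries.map ΔSym.toRingHom hSymSeries
        * (PowerSeries.map ι₁.toRingHom eSymSeries * PowerSeries.map ι₂.toRingHom eSymSeries)) := by
        rw [h2, mul_one]
    _ = (PowerSeries.map ι₁.toRingHom eSymSeries * PowerSeries.map ι₂.toRingHom eSymSeries)
        * (PowerSeries.map ΔSym.toRingHom hSymSeries * PowerSeries.map ΔSym.toRingHom eSymSeries) := by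
        ring
    _ = PowerSeries.map ι₁.toRingHom eSymSeries * PowerSeries.map ι₂.toRingHom eSymSeries := by
        rw [h1, mul_one]

lemma pSym_primitive (n : ℕ) :
    ΔSym (pSym n) = pSym n ⊗ₜ[ℂ] 1 + 1 ⊗ₜ[ℂ] pSym n := by
  have hE1 : constantCoeff (PowerSeries.map ι₁.toRingHom eSymSeries) = 1 := by
    rw [← coeff_zero_eq_constantCoeff_apply, coeff_map, coeff_zero_eq_constantCoeff_apply,
      constantCoeff_eSym, map_one]
  have hE2 : constantCoeff (PowerSeries.map ι₂.toRingHom eSymSeries) = 1 := by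
    rw [← coeff_zero_eq_constantCoeff_apply, coeff_map, coeff_zero_eq_constantCoeff_apply,
      constantCoeff_eSym, map_one]
  have key : ΔSym (coeff n (psLog eSymSeries))
      = (coeff n (psLog eSymSeries)) ⊗ₜ[ℂ] 1 + 1 ⊗ₜ[ℂ] (coeff n (psLog eSymSeries)) := by
    have h1 : ΔSym (coeff n (psLog eSymSeries))
        = coeff n (PowerSeries.map ΔSym.toRingHom (psLog eSymSeries)) := by
      rw [coeff_map]; rfl
    rw [h1, psLog_map, map_ΔSym_eSym, psLog_mul hE1 hE2, map_add, ← psLog_map, ← psLog_map,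
      coeff_map, coeff_map]
    rfl
  rw [pSym, map_smul, key, smul_add, TensorProduct.smul_tmul', TensorProduct.tmul_smul]

end DeltaAux

section ConvAux

open PowerSeries

lemma εSym_one' : εSym (1 : SymA) = 1 := map_one _

lemma convF_primitive (ξ η : SymA →ₗ[ℂ] ℂ) {x : SymA}
    (hx : ΔSym x = x ⊗ₜ[ℂ] 1 + 1 ⊗ₜ[ℂ] x) :
    convF ΔSym ξ η x = ξ x * η 1 + ξ 1 * η x := by
  rw [convF, LinearMap.comp_apply, LinearMap.comp_apply, AlgHom.toLinearMap_apply, hx, map_add,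
    TensorProduct.map_tmul, TensorProduct.map_tmul, map_add, LinearMap.mul'_apply,
    LinearMap.mul'_apply]

lemma convF_one (ξ η : SymA →ₗ[ℂ] ℂ) : convF ΔSym ξ η 1 = ξ 1 * η 1 := by
  rw [convF, LinearMap.comp_apply, LinearMap.comp_apply, AlgHom.toLinearMap_apply, map_one,
    Algebra.TensorProduct.one_def, TensorProduct.map_tmul, LinearMap.mul'_apply]

lemma convPow_one (ζ : SymA →ₗ[ℂ] ℂ) (hζ : ζ 1 = 0) (m : ℕ) :
    convPowF ΔSym εSym.toLinearMap ζ (m + 1) 1 = 0 := by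
  show convF ΔSym (convPowF ΔSym εSym.toLinearMap ζ m) ζ 1 = 0
  rw [convF_one, hζ, mul_zero]

lemma convPow_prim (ζ : SymA →ₗ[ℂ] ℂ) (hζ : ζ 1 = 0) {x : SymA}
    (hx : ΔSym x = x ⊗ₜ[ℂ] 1 + 1 ⊗ₜ[ℂ] x) (m : ℕ) :
    convPowF ΔSym εSym.toLinearMap ζ (m + 2) x = 0 := by
  show convF ΔSym (convPowF ΔSym εSym.toLinearMap ζ (m + 1)) ζ x = 0
  rw [convF_primitive _ _ hx, hζ, mul_zero, convPow_one ζ hζ, zero_mul, add_zero]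

end ConvAux

section InfCharAux

open PowerSeries

lemma εSym_homog {d : ℕ} (hd : 1 ≤ d) {u : SymA} (hu : u ∈ SymComp d) : εSym u = 0 := by
  rw [SymComp, MvPolynomial.mem_weightedHomogeneousSubmodule] at hu
  have h0 : MvPolynomial.constantCoeff u = 0 := by
    have := hu.coeff_eq_zero (0 : {m : ℕ // 1 ≤ m} →₀ ℕ) (by simp; omega)
    rwa [MvPolynomial.constantCoeff_eq]
  rw [εSym, MvPolynomial.aeval_zero', h0, map_zero]

lemma infChar_one {ξ : SymA →ₗ[ℂ] ℂ} (hξ : IsInfCharSym ξ) : ξ 1 = 0 := by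
  have h := hξ 1 1
  rw [mul_one, εSym_one', mul_one, one_mul] at h
  linear_combination -h

lemma infChar_mul_zero {ξ : SymA →ₗ[ℂ] ℂ} (hξ : IsInfCharSym ξ) {u v : SymA}
    (hu : εSym u = 0) (hv : εSym v = 0) : ξ (u * v) = 0 := by
  rw [hξ u v, hu, hv, mul_zero, zero_mul, add_zero]

lemma infChar_pSym {ξ : SymA →ₗ[ℂ] ℂ} (hξ : IsInfCharSym ξ) {m : ℕ} (hm : 1 ≤ m) :
    ξ (pSym m) = ((-1 : ℂ) ^ (m + 1) * m) * ξ (eSym m) := by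
  rw [pSym, map_smul, smul_eq_mul]
  congr 1
  have hsum : ξ (coeff m (psLog eSymSeries))
      = ∑ ℓ ∈ Finset.range (m + 1),
          ((-1 : ℂ) ^ (ℓ + 1) / ℓ) • ξ (coeff m ((eSymSeries - 1) ^ ℓ)) := by
    rw [coeff_psLog, map_sum]
    exact Finset.sum_congr rfl fun ℓ _ => map_smul ξ _ _
  have hzero : ∀ ℓ ∈ Finset.range (m + 1), ℓ ≠ 1 →
      ((-1 : ℂ) ^ (ℓ + 1) / ℓ) • ξ (coeff m ((eSymSeries - 1) ^ ℓ)) = 0 := by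
    intro ℓ _ hℓ
    rcases Nat.eq_zero_or_pos ℓ with h0 | h0
    · subst h0; simp
    · have hxz : ξ (coeff m ((eSymSeries - 1) ^ ℓ)) = 0 := by
        have hdec : (eSymSeries - 1) ^ ℓ = (eSymSeries - 1) * (eSymSeries - 1) ^ (ℓ - 1) := by
          rw [← pow_succ']
          congr 1
          omega
        rw [hdec, coeff_mul, map_sum]
        apply Finset.sum_eq_zero
        rintro ⟨i, j⟩ -
        apply infChar_mul_zero hξ
        · have h1 : εSym (coeff i (eSymSeries - 1))
              = coeff i (PowerSeries.map εSym.toRingHom (eSymSeries - 1)) := by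
            rw [coeff_map]; rfl
          rw [h1, map_sub, map_εSym_eSym, map_one, sub_self, map_zero]
        · have h1 : εSym (coeff j ((eSymSeries - 1) ^ (ℓ - 1)))
              = coeff j (PowerSeries.map εSym.toRingHom ((eSymSeries - 1) ^ (ℓ - 1))) := by
            rw [coeff_map]; rfl
          rw [h1, map_pow, map_sub, map_εSym_eSym, map_one, sub_self,
            zero_pow (by omega : ℓ - 1 ≠ 0), map_zero]
      rw [hxz, smul_zero]
  rw [hsum, Finset.sum_eq_single_of_mem 1 (Finset.mem_range.2 (by omega)) hzero]
  have h1 : coeff m (eSymSeries - 1) = eSym m := by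
    rw [map_sub, coeff_one, if_neg (by omega), sub_zero, eSym]
  rw [pow_one, h1]
  norm_num

lemma block_mem {n : ℕ} (s : Setoid (Fin n)) (a : Fin n) :
    (Finset.univ.filter fun b => s.r a b) ∈ blocks s :=
  Finset.mem_image_of_mem _ (Finset.mem_univ a)

lemma block_card_pos {n : ℕ} {s : Setoid (Fin n)} {B : Finset (Fin n)} (hB : B ∈ blocks s) :
    1 ≤ B.card := by
  rw [blocks, Finset.mem_image] at hB
  obtain ⟨a, -, rfl⟩ := hB
  exact Finset.card_pos.2 ⟨a, Finset.mem_filter.2 ⟨Finset.mem_univ _, s.iseqv.refl a⟩⟩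

lemma blocks_top {n : ℕ} (hn : 1 ≤ n) :
    blocks (topS n) = {(Finset.univ : Finset (Fin n))} := by
  rw [blocks]
  have h : (fun a : Fin n => Finset.univ.filter fun b => (topS n).r a b)
      = fun _ => (Finset.univ : Finset (Fin n)) := by
    funext a
    apply Finset.filter_true_of_mem
    intro b _
    trivial
  rw [h, Finset.image_const ⟨⟨0, by omega⟩, Finset.mem_univ _⟩]

lemma eq_topS_of_card_one {n : ℕ} {s : Setoid (Fin n)} (h : (blocks s).card = 1) :
    s = topS n := by
  obtain ⟨B, hB⟩ := Finset.card_eq_one.mp h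
  have hcls : ∀ a : Fin n, (Finset.univ.filter fun b => s.r a b) = B := by
    intro a
    have h1 := block_mem s a
    rw [hB, Finset.mem_singleton] at h1
    exact h1
  have hmem : ∀ a : Fin n, a ∈ B := fun a => by
    rw [← hcls a]
    exact Finset.mem_filter.2 ⟨Finset.mem_univ _, s.iseqv.refl a⟩
  apply Setoid.ext
  intro a b
  constructor
  · intro _
    trivial
  · intro _
    have h2 : b ∈ Finset.univ.filter fun x => s.r a x := by
      rw [hcls a]; exact hmem b
    exact (Finset.mem_filter.mp h2).2

lemma infChar_ySym {ξ : SymA →ₗ[ℂ] ℂ} (hξ : IsInfCharSym ξ) {n : ℕ} (hn : 2 ≤ n) :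
    ξ (ySym n) = ξ (eSym (n - 1)) := by
  rw [ySym, map_sum]
  have hzero : ∀ π : NC (n - 1), π ∈ Finset.univ → π ≠ ncTop (n - 1) →
      ξ (∏ B ∈ blocks π.1, eSym B.card) = 0 := by
    intro π _ hπ
    rcases lt_or_ge (blocks π.1).card 2 with hcard | hcard
    · have hc : (blocks π.1).card = 0 ∨ (blocks π.1).card = 1 := by omega
      rcases hc with h0 | h1
      · rw [Finset.card_eq_zero.mp h0, Finset.prod_empty]
        exact infChar_one hξ
      · exact absurd (Subtype.ext (eq_topS_of_card_one h1)) hπ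
    · obtain ⟨B₀, hB₀⟩ := Finset.card_pos.mp (by omega : 0 < (blocks π.1).card)
      rw [← Finset.mul_prod_erase _ _ hB₀]
      apply infChar_mul_zero hξ (εSym_eSym (block_card_pos hB₀))
      rw [map_prod]
      obtain ⟨B₁, hB₁⟩ : ((blocks π.1).erase B₀).Nonempty := by
        rw [← Finset.card_pos, Finset.card_erase_of_mem hB₀]; omega
      exact Finset.prod_eq_zero hB₁ (εSym_eSym (block_card_pos (Finset.mem_of_mem_erase hB₁)))
  rw [Finset.sum_eq_single_of_mem (ncTop (n - 1)) (Finset.mem_univ _) hzero]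
  have hb : blocks (ncTop (n - 1)).1 = {(Finset.univ : Finset (Fin (n - 1)))} :=
    blocks_top (by omega)
  rw [hb, Finset.prod_singleton, Finset.card_univ, Fintype.card_fin]

end InfCharAux

/-- Lemma 6.11.
(1) An infinitesimal character of `Sym` kills products of two homogeneous symmetric
functions of degrees `≥ 1`.
(2) If `η` is a character of `Sym` and `ξ = log η`, then `ξ(p_n) = η(p_n)` for `n ≥ 1`.
(3) If `ξ` is an infinitesimal character of `Sym`, then
`ξ(y_n) = ((-1)^n/(n-1)) ξ(p_{n-1})` for `n ≥ 2`. -/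
theorem infinitesimal_characters_Sym :
    (∀ ξ : SymA →ₗ[ℂ] ℂ, IsInfCharSym ξ →
      ∀ (d₁ d₂ : ℕ) (u₁ u₂ : SymA), 1 ≤ d₁ → 1 ≤ d₂ →
        u₁ ∈ SymComp d₁ → u₂ ∈ SymComp d₂ → ξ (u₁ * u₂) = 0) ∧
    (∀ η : SymA →ₐ[ℂ] ℂ, ∀ n : ℕ, 1 ≤ n →
      logFunF ΔSym εSym.toLinearMap η.toLinearMap (pSym n) = η (pSym n)) ∧
    (∀ ξ : SymA →ₗ[ℂ] ℂ, IsInfCharSym ξ → ∀ n : ℕ, 2 ≤ n →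
      ξ (ySym n) = ((-1 : ℂ) ^ n / ((n : ℂ) - 1)) * ξ (pSym (n - 1))) := by
  refine ⟨?_, ?_, ?_⟩
  · -- Part (1)
    intro ξ hξ d₁ d₂ u₁ u₂ h₁ h₂ hu₁ hu₂
    rw [hξ u₁ u₂, εSym_homog h₂ hu₂, εSym_homog h₁ hu₁, mul_zero, zero_mul, add_zero]
  · -- Part (2)
    intro η n hn
    rw [logFunF]
    set ζ : SymA →ₗ[ℂ] ℂ := εSym.toLinearMap - η.toLinearMap with hζdef
    have hζ1 : ζ 1 = 0 := by
      rw [hζdef, LinearMap.sub_apply, AlgHom.toLinearMap_apply, AlgHom.toLinearMap_apply,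
        map_one, map_one, sub_self]
    have hprim := pSym_primitive n
    have hterm : ∀ ℓ : ℕ, ℓ ≠ 0 →
        (1 / ((ℓ : ℂ) + 1)) * convPowF ΔSym εSym.toLinearMap ζ (ℓ + 1) (pSym n) = 0 := by
      intro ℓ hℓ
      obtain ⟨m, rfl⟩ := Nat.exists_eq_succ_of_ne_zero hℓ
      rw [show m + 1 + 1 = m + 2 from rfl, convPow_prim ζ hζ1 hprim m, mul_zero]
    rw [(hasSum_single (f := fun ℓ : ℕ =>
      (1 / ((ℓ : ℂ) + 1)) * convPowF ΔSym εSym.toLinearMap ζ (ℓ + 1) (pSym n)) 0 hterm).tsum_eq]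
    have h1 : convPowF ΔSym εSym.toLinearMap ζ (0 + 1) (pSym n) = - η (pSym n) := by
      show convF ΔSym εSym.toLinearMap ζ (pSym n) = - η (pSym n)
      rw [convF_primitive _ _ hprim, hζ1, mul_zero, zero_add, AlgHom.toLinearMap_apply,
        εSym_one', one_mul, hζdef, LinearMap.sub_apply, AlgHom.toLinearMap_apply,
        AlgHom.toLinearMap_apply, εSym_pSym, zero_sub]
    rw [h1]
    norm_num
  · -- Part (3)
    intro ξ hξ n hn
    rw [infChar_ySym hξ hn, infChar_pSym hξ (show 1 ≤ n - 1 by omega)]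
    have h1 : n - 1 + 1 = n := by omega
    have h2 : ((n - 1 : ℕ) : ℂ) = (n : ℂ) - 1 := by
      rw [Nat.cast_sub (by omega), Nat.cast_one]
    rw [h1, h2]
    have h3 : (n : ℂ) - 1 ≠ 0 := sub_ne_zero.mpr (by
      rw [Ne, Nat.cast_eq_one]; omega)
    have h4 : (-1 : ℂ) ^ n * (-1 : ℂ) ^ n = 1 := by
      rw [← mul_pow]; norm_num
    have h5 : (-1 : ℂ) ^ n / ((n : ℂ) - 1) * ((-1 : ℂ) ^ n * ((n : ℂ) - 1) * ξ (eSym (n - 1)))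
        = ((-1 : ℂ) ^ n * (-1 : ℂ) ^ n) * (((n : ℂ) - 1) / ((n : ℂ) - 1)) * ξ (eSym (n - 1)) := by
      ring
    rw [h5, h4, div_self h3, one_mul, one_mul]

end FreeProb

end
end
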